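/- arXiv:1305.0241 — 5 statements merged into one kernel-verified Lean document; each statement's English description precedes it below -/
import Mathlib

section
/- For any b > 0 and m ≥ 1, the limit as n → ∞ of n^{-m} times the integral of ∏_{i=1}^m (1 - e^{-b u_i})/u_i over the simplex region { u ∈ (0,∞)^m : ∑ u_i < e^{nt} } equals t^m, for every t > 0. -/
open MeasureTheory Filter

noncomputable def hfn (b : ℝ) (u : ℝ) : ℝ := (1 - Real.exp (-b * u)) / u

lemma hfn_nonneg (b : ℝ) (hb : 0 < b) (u : ℝ) : 0 ≤ hfn b u := by
  unfold hfn
  rcases lt_trichotomy u 0 with hu | hu | hu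
  · apply div_nonneg_of_nonpos _ hu.le
    have : (1:ℝ) ≤ Real.exp (-b * u) := by
      rw [← Real.exp_zero]
      exact Real.exp_le_exp.mpr (by nlinarith)
    linarith
  · simp [hu]
  · apply div_nonneg _ hu.le
    have : Real.exp (-b * u) ≤ 1 := by
      rw [← Real.exp_zero]
      exact Real.exp_le_exp.mpr (by nlinarith)
    linarith

lemma hfn_le (b : ℝ) {u : ℝ} (hu : 0 < u) : hfn b u ≤ b := by
  unfold hfn
  rw [div_le_iff₀ hu]
  have := Real.add_one_le_exp (-b * u)
  linarith

lemma hfn_measurable (b : ℝ) : Measurable (hfn b) :=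
  (measurable_const.sub (Real.measurable_exp.comp (measurable_id.const_mul (-b)))).div
    measurable_id

lemma hfn_integrableOn (b : ℝ) (hb : 0 < b) (R : ℝ) :
    IntegrableOn (hfn b) (Set.Ioo 0 R) := by
  apply Measure.integrableOn_of_bounded (M := b)
  · simp [Real.volume_Ioo]
  · exact (hfn_measurable b).aestronglyMeasurable
  · refine (ae_restrict_iff' measurableSet_Ioo).2 (Filter.Eventually.of_forall fun x hx => ?_)
    rw [Real.norm_of_nonneg (hfn_nonneg b hb x)]
    exact hfn_le b hx.1

noncomputable def Ifn (b : ℝ) (R : ℝ) : ℝ := ∫ u in Set.Ioo 0 R, hfn b u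

lemma Ifn_nonneg (b : ℝ) (hb : 0 < b) (R : ℝ) : 0 ≤ Ifn b R :=
  setIntegral_nonneg measurableSet_Ioo fun x _ => hfn_nonneg b hb x

lemma Ifn_eq_interval (b : ℝ) {R : ℝ} (hR : 0 ≤ R) :
    Ifn b R = ∫ u in (0:ℝ)..R, hfn b u := by
  rw [intervalIntegral.integral_of_le hR]
  unfold Ifn
  exact MeasureTheory.integral_Ioc_eq_integral_Ioo.symm

lemma Ifn_bounds (b : ℝ) (hb : 0 < b) {R : ℝ} (hR : 1 ≤ R) :
    Real.log R + (Ifn b 1 - 1/b) ≤ Ifn b R ∧ Ifn b R ≤ Real.log R + Ifn b 1 := by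
  have int01 : IntervalIntegrable (hfn b) volume 0 1 := by
    rw [intervalIntegrable_iff_integrableOn_Ioc_of_le zero_le_one]
    exact (hfn_integrableOn b hb 2).mono_set
      (fun x hx => ⟨hx.1, lt_of_le_of_lt hx.2 one_lt_two⟩)
  have int1R : IntervalIntegrable (hfn b) volume 1 R := by
    rw [intervalIntegrable_iff_integrableOn_Ioc_of_le hR]
    exact (hfn_integrableOn b hb (R+1)).mono_set
      (fun x hx => ⟨lt_trans one_pos hx.1, lt_of_le_of_lt hx.2 (lt_add_one R)⟩)
  have huIcc : Set.uIcc (1:ℝ) R = Set.Icc 1 R := Set.uIcc_of_le hR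
  have hmempos : ∀ x ∈ Set.uIcc (1:ℝ) R, (0:ℝ) < x := by
    intro x hx
    rw [huIcc] at hx
    linarith [hx.1]
  have cont1 : IntervalIntegrable (fun u : ℝ => 1/u) volume 1 R := by
    apply ContinuousOn.intervalIntegrable
    exact continuousOn_const.div continuousOn_id (fun x hx => ne_of_gt (hmempos x hx))
  have cont2 : IntervalIntegrable (fun u : ℝ => Real.exp (-b*u)/u) volume 1 R := by
    apply ContinuousOn.intervalIntegrable
    exact (Real.continuous_exp.comp (continuous_const.mul continuous_id)).continuousOn.div
      continuousOn_id (fun x hx => ne_of_gt (hmempos x hx))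
  have cont3 : IntervalIntegrable (fun u : ℝ => Real.exp (-b*u)) volume 1 R :=
    ((Real.continuous_exp.comp (continuous_const.mul continuous_id)).continuousOn).intervalIntegrable
  have hsplit : ∫ u in (1:ℝ)..R, hfn b u
      = Real.log R - ∫ u in (1:ℝ)..R, Real.exp (-b*u)/u := by
    have heq : Set.EqOn (hfn b) (fun u : ℝ => 1/u - Real.exp (-b*u)/u) (Set.uIcc 1 R) := by
      intro x hx
      have hx0 : x ≠ 0 := ne_of_gt (hmempos x hx)
      unfold hfn
      field_simp
    rw [intervalIntegral.integral_congr heq, intervalIntegral.integral_sub cont1 cont2,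
      integral_one_div (by rw [huIcc]; intro h; linarith [h.1] : (0:ℝ) ∉ Set.uIcc 1 R), div_one]
  have hJ0 : 0 ≤ ∫ u in (1:ℝ)..R, Real.exp (-b*u)/u := by
    apply intervalIntegral.integral_nonneg hR
    intro u hu
    have h0 : (0:ℝ) < u := by linarith [hu.1]
    positivity
  have hJb : (∫ u in (1:ℝ)..R, Real.exp (-b*u)/u) ≤ 1/b := by
    have step1 : (∫ u in (1:ℝ)..R, Real.exp (-b*u)/u) ≤ ∫ u in (1:ℝ)..R, Real.exp (-b*u) := by
      apply intervalIntegral.integral_mono_on hR cont2 cont3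
      intro u hu
      exact div_le_self (Real.exp_pos _).le hu.1
    have step2 : (∫ u in (1:ℝ)..R, Real.exp (-b*u)) ≤ 1/b := by
      rw [intervalIntegral.integral_comp_mul_left (fun x => Real.exp x) (c := -b)
        (neg_ne_zero.mpr hb.ne'), integral_exp]
      rw [smul_eq_mul]
      have h1 : Real.exp (-b*R) ≤ Real.exp (-b*1) := Real.exp_le_exp.mpr (by nlinarith)
      have h2 : Real.exp (-b*1) ≤ 1 := Real.exp_le_one_iff.mpr (by nlinarith)
      have h3 : 0 < Real.exp (-b*R) := Real.exp_pos _
      have key : (-b)⁻¹ * (Real.exp (-b*R) - Real.exp (-b*1))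
          = (Real.exp (-b*1) - Real.exp (-b*R))/b := by
        rw [inv_neg, div_eq_mul_inv]
        ring
      rw [key]
      gcongr
      linarith
    linarith
  have hadj : Ifn b 1 + ∫ u in (1:ℝ)..R, hfn b u = Ifn b R := by
    rw [Ifn_eq_interval b (le_trans zero_le_one hR), Ifn_eq_interval b zero_le_one]
    exact intervalIntegral.integral_add_adjacent_intervals int01 int1R
  constructor <;> [skip; skip] <;> (rw [← hadj, hsplit]) <;> linarith

lemma tendsto_aux (t : ℝ) (d : ℝ) :
    Tendsto (fun n : ℕ => ((n:ℝ) * t + d) / n) atTop (nhds t) := by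
  have h0 : Tendsto (fun n : ℕ => t + d * (1/(n:ℝ))) atTop (nhds t) := by
    have h : Tendsto (fun n : ℕ => 1/(n:ℝ)) atTop (nhds 0) := tendsto_one_div_atTop_nhds_zero_nat
    simpa using tendsto_const_nhds.add (h.const_mul d)
  apply h0.congr'
  filter_upwards [eventually_ge_atTop 1] with n hn
  have hn0 : (n:ℝ) ≠ 0 := Nat.cast_ne_zero.mpr (by omega)
  field_simp

lemma tendsto_Ifn (b t c : ℝ) (hb : 0 < b) (ht : 0 < t) (hc : 0 < c) :
    Tendsto (fun n : ℕ => Ifn b (Real.exp (n * t) / c) / n) atTop (nhds t) := by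
  have hev : ∀ᶠ n : ℕ in atTop,
      ((n:ℝ)*t + (Ifn b 1 - 1/b - Real.log c))/n ≤ Ifn b (Real.exp (n*t)/c)/n
      ∧ Ifn b (Real.exp (n*t)/c)/n ≤ ((n:ℝ)*t + (Ifn b 1 - Real.log c))/n := by
    filter_upwards [eventually_ge_atTop (max 1 ⌈Real.log c / t⌉₊)] with n hn
    have hn1 : 1 ≤ n := le_trans (le_max_left _ _) hn
    have hnpos : (0:ℝ) < n := by exact_mod_cast Nat.lt_of_lt_of_le Nat.zero_lt_one hn1
    have hR : 1 ≤ Real.exp ((n:ℝ)*t)/c := by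
      rw [le_div_iff₀ hc, one_mul]
      have hceil : (⌈Real.log c / t⌉₊ : ℝ) ≤ n := by
        exact_mod_cast le_trans (le_max_right 1 _) hn
      have hlog_le : Real.log c ≤ (n:ℝ) * t := by
        have h1 : Real.log c / t ≤ n := le_trans (Nat.le_ceil _) hceil
        calc Real.log c = (Real.log c / t) * t := by field_simp
          _ ≤ (n:ℝ) * t := mul_le_mul_of_nonneg_right h1 ht.le
      calc c = Real.exp (Real.log c) := (Real.exp_log hc).symm
        _ ≤ Real.exp ((n:ℝ)*t) := Real.exp_le_exp.mpr hlog_le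
    obtain ⟨hL, hU⟩ := Ifn_bounds b hb hR
    have hlog : Real.log (Real.exp ((n:ℝ)*t)/c) = (n:ℝ)*t - Real.log c := by
      rw [Real.log_div (Real.exp_ne_zero _) hc.ne', Real.log_exp]
    rw [hlog] at hL hU
    constructor
    · exact (div_le_div_iff_of_pos_right hnpos).mpr (by linarith)
    · exact (div_le_div_iff_of_pos_right hnpos).mpr (by linarith)
  exact tendsto_of_tendsto_of_tendsto_of_le_of_le' (tendsto_aux t _) (tendsto_aux t _)
    (hev.mono fun n h => h.1) (hev.mono fun n h => h.2)

lemma indicator_pi_prod (b : ℝ) (m : ℕ) (R : ℝ) (u : Fin m → ℝ) :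
    (Set.univ.pi fun _ : Fin m => Set.Ioo (0:ℝ) R).indicator
      (fun u : Fin m → ℝ => ∏ i, hfn b (u i)) u
    = ∏ i, (Set.Ioo (0:ℝ) R).indicator (hfn b) (u i) := by
  by_cases hu : u ∈ Set.univ.pi fun _ : Fin m => Set.Ioo (0:ℝ) R
  · rw [Set.indicator_of_mem hu]
    exact Finset.prod_congr rfl fun i _ =>
      (Set.indicator_of_mem (hu i (Set.mem_univ i)) _).symm
  · rw [Set.indicator_of_notMem hu]
    obtain ⟨i, hi⟩ : ∃ i, u i ∉ Set.Ioo (0:ℝ) R := by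
      by_contra h
      push_neg at h
      exact hu fun i _ => h i
    exact (Finset.prod_eq_zero (Finset.mem_univ i) (Set.indicator_of_notMem hi _)).symm

lemma box_integral (b : ℝ) (m : ℕ) (R : ℝ) :
    ∫ u in Set.univ.pi (fun _ : Fin m => Set.Ioo (0:ℝ) R), ∏ i, hfn b (u i)
      = (Ifn b R) ^ m := by
  rw [← MeasureTheory.integral_indicator (MeasurableSet.univ_pi fun _ => measurableSet_Ioo)]
  simp_rw [indicator_pi_prod]
  rw [MeasureTheory.integral_fintype_prod_volume_eq_pow ((Set.Ioo (0:ℝ) R).indicator (hfn b)),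
    MeasureTheory.integral_indicator measurableSet_Ioo, Fintype.card_fin]
  rfl

lemma box_integrable (b : ℝ) (hb : 0 < b) (m : ℕ) (R : ℝ) :
    IntegrableOn (fun u : Fin m → ℝ => ∏ i, hfn b (u i))
      (Set.univ.pi fun _ : Fin m => Set.Ioo (0:ℝ) R) := by
  refine (MeasureTheory.integrable_indicator_iff
    (MeasurableSet.univ_pi fun _ => measurableSet_Ioo)).mp ?_
  have : (Set.univ.pi fun _ : Fin m => Set.Ioo (0:ℝ) R).indicator
      (fun u : Fin m → ℝ => ∏ i, hfn b (u i))
      = fun u : Fin m → ℝ => ∏ i, (Set.Ioo (0:ℝ) R).indicator (hfn b) (u i) :=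
    funext (indicator_pi_prod b m R)
  rw [this]
  exact Integrable.fintype_prod fun _ =>
    (MeasureTheory.integrable_indicator_iff measurableSet_Ioo).mpr (hfn_integrableOn b hb R)

/-- `n^{-m}` times the integral of `∏ (1 - e^{-b uᵢ})/uᵢ` over the simplex
`{u ∈ (0,∞)^m : ∑ uᵢ < e^{nt}}` tends to `t^m`. -/
theorem simplex_integral_limit (b t : ℝ) (hb : 0 < b) (ht : 0 < t) (m : ℕ) (hm : 1 ≤ m) :
    Tendsto (fun n : ℕ =>
        (n : ℝ) ^ (-(m : ℤ)) *
          ∫ u in {u : Fin m → ℝ | (∀ i, 0 < u i) ∧ ∑ i, u i < Real.exp (n * t)},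
            ∏ i, (1 - Real.exp (-b * u i)) / u i)
      atTop (nhds (t ^ m)) := by
  haveI : Nonempty (Fin m) := ⟨⟨0, hm⟩⟩
  have hm0 : ((m:ℝ)) ≠ 0 := Nat.cast_ne_zero.mpr (by omega)
  have hmpos : (0:ℝ) < m := by positivity
  have hgoal_eq : (fun n : ℕ =>
        (n : ℝ) ^ (-(m : ℤ)) *
          ∫ u in {u : Fin m → ℝ | (∀ i, 0 < u i) ∧ ∑ i, u i < Real.exp (n * t)},
            ∏ i, (1 - Real.exp (-b * u i)) / u i)
      = fun n : ℕ =>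
        (n : ℝ) ^ (-(m : ℤ)) *
          ∫ u in {u : Fin m → ℝ | (∀ i, 0 < u i) ∧ ∑ i, u i < Real.exp (n * t)},
            ∏ i, hfn b (u i) := rfl
  rw [hgoal_eq]
  have key : ∀ n : ℕ,
      (Ifn b (Real.exp ((n:ℝ)*t)/m))^m
        ≤ (∫ u in {u : Fin m → ℝ | (∀ i, 0 < u i) ∧ ∑ i, u i < Real.exp (n * t)},
            ∏ i, hfn b (u i))
      ∧ (∫ u in {u : Fin m → ℝ | (∀ i, 0 < u i) ∧ ∑ i, u i < Real.exp (n * t)},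
            ∏ i, hfn b (u i))
        ≤ (Ifn b (Real.exp ((n:ℝ)*t)))^m := by
    intro n
    set R := Real.exp ((n:ℝ)*t) with hRdef
    set S : Set (Fin m → ℝ) := {u : Fin m → ℝ | (∀ i, 0 < u i) ∧ ∑ i, u i < Real.exp (n * t)}
      with hSdef
    have hsub2 : S ⊆ Set.univ.pi fun _ : Fin m => Set.Ioo (0:ℝ) R := by
      rintro u ⟨hpos, hsum⟩ i _
      refine ⟨hpos i, lt_of_le_of_lt ?_ hsum⟩
      exact Finset.single_le_sum (fun j _ => (hpos j).le) (Finset.mem_univ i)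
    have hsub1 : (Set.univ.pi fun _ : Fin m => Set.Ioo (0:ℝ) (R/m)) ⊆ S := by
      intro u hu
      refine ⟨fun i => (hu i (Set.mem_univ i)).1, ?_⟩
      calc ∑ i, u i < ∑ _i : Fin m, R/m :=
            Finset.sum_lt_sum_of_nonempty Finset.univ_nonempty
              fun i _ => (hu i (Set.mem_univ i)).2
        _ = R := by
            rw [Finset.sum_const, Finset.card_univ, Fintype.card_fin, nsmul_eq_mul,
              mul_div_cancel₀ _ hm0]
    have hnonneg : ∀ u : Fin m → ℝ, 0 ≤ ∏ i, hfn b (u i) :=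
      fun u => Finset.prod_nonneg fun i _ => hfn_nonneg b hb _
    have hint2 : IntegrableOn (fun u : Fin m → ℝ => ∏ i, hfn b (u i))
        (Set.univ.pi fun _ : Fin m => Set.Ioo (0:ℝ) R) := box_integrable b hb m R
    constructor
    · rw [← box_integral b m (R/m)]
      exact setIntegral_mono_set (hint2.mono_set hsub2)
        (Filter.Eventually.of_forall hnonneg) (HasSubset.Subset.eventuallyLE hsub1)
    · rw [← box_integral b m R]
      exact setIntegral_mono_set hint2
        (Filter.Eventually.of_forall hnonneg) (HasSubset.Subset.eventuallyLE hsub2)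
  have hlo : Tendsto (fun n : ℕ => (Ifn b (Real.exp ((n:ℝ)*t)/m)/n)^m) atTop (nhds (t^m)) :=
    (tendsto_Ifn b t m hb ht hmpos).pow m
  have hhi : Tendsto (fun n : ℕ => (Ifn b (Real.exp ((n:ℝ)*t))/n)^m) atTop (nhds (t^m)) := by
    have h := (tendsto_Ifn b t 1 hb ht one_pos).pow m
    simpa using h
  refine tendsto_of_tendsto_of_tendsto_of_le_of_le' hlo hhi ?_ ?_
  · filter_upwards [eventually_ge_atTop 1] with n hn
    have hnpos : (0:ℝ) < n := by exact_mod_cast Nat.lt_of_lt_of_le Nat.zero_lt_one hn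
    have hz : ((n:ℝ))^(-(m:ℤ)) = (((n:ℝ))^m)⁻¹ := by rw [zpow_neg, zpow_natCast]
    rw [hz, div_pow]
    calc Ifn b (Real.exp ((n:ℝ)*t)/m) ^ m / (n:ℝ) ^ m
        = (((n:ℝ))^m)⁻¹ * (Ifn b (Real.exp ((n:ℝ)*t)/m))^m := by ring
      _ ≤ _ := mul_le_mul_of_nonneg_left (key n).1 (by positivity)
  · filter_upwards [eventually_ge_atTop 1] with n hn
    have hnpos : (0:ℝ) < n := by exact_mod_cast Nat.lt_of_lt_of_le Nat.zero_lt_one hn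
    have hz : ((n:ℝ))^(-(m:ℤ)) = (((n:ℝ))^m)⁻¹ := by rw [zpow_neg, zpow_natCast]
    rw [hz, div_pow]
    calc (((n:ℝ))^m)⁻¹ *
          (∫ u in {u : Fin m → ℝ | (∀ i, 0 < u i) ∧ ∑ i, u i < Real.exp (n * t)},
            ∏ i, hfn b (u i))
        ≤ (((n:ℝ))^m)⁻¹ * (Ifn b (Real.exp ((n:ℝ)*t)))^m :=
          mul_le_mul_of_nonneg_left (key n).2 (by positivity)
      _ = Ifn b (Real.exp ((n:ℝ)*t)) ^ m / (n:ℝ) ^ m := by ring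
end

section
/- For any b > 0 and m ≥ 1, the integral of ∏_{i=1}^m (1 - e^{-b u_i})/u_i over the set { u ∈ [0, e^{nt}]^m : u_j > e^{nt}/m for some j } is bounded by a constant (independent of n) times n^{m-1}. -/
open MeasureTheory

noncomputable def gbd (b : ℝ) : ℝ → ℝ := fun x => if x ≤ 1 then max b 1 else x⁻¹

lemma gbd_nonneg (b x : ℝ) : 0 ≤ gbd b x := by
  unfold gbd; split_ifs with h
  · exact le_trans zero_le_one (le_max_right b 1)
  · exact inv_nonneg.2 (le_of_lt (lt_trans one_pos (not_le.1 h)))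

lemma gbd_le (b x : ℝ) : gbd b x ≤ max b 1 := by
  unfold gbd; split_ifs with h
  · exact le_rfl
  · exact le_trans (inv_le_one_of_one_le₀ (le_of_lt (not_le.1 h))) (le_max_right b 1)

lemma gbd_meas (b : ℝ) : Measurable (gbd b) :=
  Measurable.ite (measurableSet_le measurable_id measurable_const)
    measurable_const measurable_inv

lemma h_nonneg (b : ℝ) (hb : 0 < b) {x : ℝ} (hx : 0 ≤ x) :
    0 ≤ (1 - Real.exp (-b * x)) / x := by
  apply div_nonneg _ hx
  have : Real.exp (-b * x) ≤ Real.exp 0 := Real.exp_le_exp.2 (by nlinarith)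
  rw [Real.exp_zero] at this; linarith

lemma h_le_gbd (b : ℝ) (hb : 0 < b) {x : ℝ} (hx : 0 ≤ x) :
    (1 - Real.exp (-b * x)) / x ≤ gbd b x := by
  unfold gbd; split_ifs with h1
  · rcases eq_or_lt_of_le hx with h0 | h0
    · rw [← h0]; simp
    · have key : 1 - Real.exp (-b * x) ≤ b * x := by
        nlinarith [Real.add_one_le_exp (-b * x)]
      calc (1 - Real.exp (-b * x)) / x ≤ (b * x) / x := by gcongr
        _ = b := mul_div_cancel_right₀ b (ne_of_gt h0)
        _ ≤ max b 1 := le_max_left b 1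
  · push_neg at h1
    have hx0 : (0:ℝ) < x := lt_trans one_pos h1
    have : 1 - Real.exp (-b * x) ≤ 1 := by
      have := Real.exp_pos (-b * x); linarith
    calc (1 - Real.exp (-b * x)) / x ≤ 1 / x := by gcongr
      _ = x⁻¹ := one_div x

lemma integrableOn_gbd (b : ℝ) (s : Set ℝ) (h : volume s < ⊤) :
    IntegrableOn (gbd b) s := by
  refine Integrable.mono'
    ((integrableOn_const h.ne) : IntegrableOn (fun _ => max b 1) s volume)
    ((gbd_meas b).aestronglyMeasurable) (Filter.Eventually.of_forall fun x => ?_)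
  rw [Real.norm_eq_abs, abs_of_nonneg (gbd_nonneg b x)]
  exact gbd_le b x

lemma integral_gbd_Icc (b : ℝ) {E : ℝ} (hE : 1 ≤ E) :
    ∫ x in Set.Icc 0 E, gbd b x ≤ max b 1 + Real.log E := by
  have hsplit : Set.Icc (0:ℝ) E = Set.Icc 0 1 ∪ Set.Ioc 1 E :=
    (Set.Icc_union_Ioc_eq_Icc zero_le_one hE).symm
  have hdisj : Disjoint (Set.Icc (0:ℝ) 1) (Set.Ioc 1 E) := by
    rw [Set.disjoint_left]; rintro x ⟨_, h1⟩ ⟨h2, _⟩; linarith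
  have hi1 : IntegrableOn (gbd b) (Set.Icc (0:ℝ) 1) :=
    integrableOn_gbd b _ (by simp [Real.volume_Icc])
  have hi2 : IntegrableOn (gbd b) (Set.Ioc (1:ℝ) E) :=
    integrableOn_gbd b _ (by simp [Real.volume_Ioc])
  rw [hsplit, setIntegral_union hdisj measurableSet_Ioc hi1 hi2]
  have e1 : ∫ x in Set.Icc (0:ℝ) 1, gbd b x = max b 1 := by
    have heq : Set.EqOn (gbd b) (fun _ => max b 1) (Set.Icc (0:ℝ) 1) := fun x hx => by
      simp only [gbd]; rw [if_pos hx.2]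
    rw [setIntegral_congr_fun measurableSet_Icc heq, setIntegral_const]
    simp [Real.volume_Icc]
  have e2 : ∫ x in Set.Ioc (1:ℝ) E, gbd b x = Real.log E := by
    have heq : Set.EqOn (gbd b) (fun x => x⁻¹) (Set.Ioc (1:ℝ) E) := fun x hx => by
      simp only [gbd]; rw [if_neg (not_le.2 hx.1)]
    rw [setIntegral_congr_fun measurableSet_Ioc heq, ← intervalIntegral.integral_of_le hE,
      integral_inv_of_pos one_pos (lt_of_lt_of_le one_pos hE), div_one]
  rw [e1, e2]

lemma integral_gbd_Ioc (b : ℝ) {E : ℝ} {m : ℕ} (hm : 1 ≤ m) (hE : 1 ≤ E) :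
    ∫ x in Set.Ioc (E / m) E, gbd b x ≤ max b 1 * m := by
  have hm0 : (0:ℝ) < m := by exact_mod_cast hm
  have hE0 : (0:ℝ) < E := lt_of_lt_of_le one_pos hE
  have hK0 : (0:ℝ) < max b 1 := lt_of_lt_of_le one_pos (le_max_right b 1)
  have key : ∀ x ∈ Set.Ioc (E / m) E, gbd b x ≤ max b 1 * m / E := by
    rintro x ⟨hx1, hx2⟩
    unfold gbd; split_ifs with h
    · have hEm : E ≤ m := by
        have : E / m < 1 := lt_of_lt_of_le hx1 h
        rw [div_lt_one hm0] at this; linarith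
      rw [le_div_iff₀ hE0]
      gcongr
    · have hEm0 : 0 < E / m := div_pos hE0 hm0
      have h1 : x⁻¹ ≤ (E / m)⁻¹ := by
        apply inv_anti₀ hEm0 (le_of_lt hx1)
      calc x⁻¹ ≤ (E / m)⁻¹ := h1
        _ = m / E := by rw [inv_div]
        _ ≤ max b 1 * m / E := by
            apply (div_le_div_iff_of_pos_right hE0).2
            nlinarith [le_max_right b 1]
  have hvol : volume (Set.Ioc (E / m) E) < ⊤ := by
    simp [Real.volume_Ioc]
  have hmono := setIntegral_mono_on (integrableOn_gbd b _ hvol)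
    (integrableOn_const hvol.ne) measurableSet_Ioc key
  have hle : E / m ≤ E := div_le_self (le_of_lt hE0) (by exact_mod_cast hm)
  calc ∫ x in Set.Ioc (E / m) E, gbd b x
      ≤ ∫ _ in Set.Ioc (E / m) E, (max b 1 * m / E) := hmono
    _ = (E - E / m) * (max b 1 * m / E) := by
        rw [setIntegral_const, measureReal_def, Real.volume_Ioc, smul_eq_mul,
          ENNReal.toReal_ofReal (by linarith)]
    _ ≤ E * (max b 1 * m / E) := by
        apply mul_le_mul_of_nonneg_right (by linarith [div_pos hE0 hm0])
          (div_nonneg (mul_nonneg (le_of_lt hK0) (le_of_lt hm0)) (le_of_lt hE0))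
    _ = max b 1 * m := by field_simp

/-- The integral of `∏ (1 - e^{-b uᵢ})/uᵢ` over the part of the cube
`[0, e^{nt}]^m` where some coordinate exceeds `e^{nt}/m` is `O(n^{m-1})`. -/
theorem complement_integral_bound (b t : ℝ) (hb : 0 < b) (ht : 0 < t) (m : ℕ) (hm : 1 ≤ m) :
    ∃ C : ℝ, ∀ n : ℕ, 1 ≤ n →
      (∫ u in {u : Fin m → ℝ |
          (∀ i, u i ∈ Set.Icc 0 (Real.exp (n * t))) ∧ ∃ j, Real.exp (n * t) / m < u j},
        ∏ i, (1 - Real.exp (-b * u i)) / u i) ≤ C * (n : ℝ) ^ (m - 1) := by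
  set C0 := max b 1 with hC0
  refine ⟨(m : ℝ) * (C0 * m) * (C0 + t) ^ (m - 1), ?_⟩
  intro n hn
  set E := Real.exp (n * t) with hEdef
  have hnt : (0 : ℝ) ≤ n * t := by positivity
  have hE1 : 1 ≤ E := Real.one_le_exp hnt
  have hE0 : (0 : ℝ) < E := lt_of_lt_of_le one_pos hE1
  have hm0 : (0 : ℝ) < m := by exact_mod_cast hm
  have hC0pos : (0 : ℝ) < C0 := lt_of_lt_of_le one_pos (le_max_right b 1)
  set I : Fin m → Fin m → Set ℝ :=
    fun j i => if i = j then Set.Ioc (E / m) E else Set.Icc 0 E with hI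
  set B : Fin m → Set (Fin m → ℝ) := fun j => Set.univ.pi (I j) with hB
  set G : (Fin m → ℝ) → ℝ := fun u => ∏ i, gbd b (u i) with hG
  set S : Set (Fin m → ℝ) :=
    {u | (∀ i, u i ∈ Set.Icc 0 E) ∧ ∃ j, E / m < u j} with hS
  have hImeas : ∀ j i, MeasurableSet (I j i) := by
    intro j i; simp only [hI]; split_ifs
    exacts [measurableSet_Ioc, measurableSet_Icc]
  have hBmeas : ∀ j, MeasurableSet (B j) := fun j => MeasurableSet.univ_pi (hImeas j)
  have hSmeas : MeasurableSet S := by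
    rw [hS, Set.setOf_and]
    apply MeasurableSet.inter
    · rw [Set.setOf_forall]
      exact MeasurableSet.iInter fun i => (measurable_pi_apply i) measurableSet_Icc
    · rw [Set.setOf_exists]
      exact MeasurableSet.iUnion fun j => (measurable_pi_apply j) measurableSet_Ioi
  have hsub : S ⊆ ⋃ j, B j := by
    rintro u ⟨hbox, j, hj⟩
    refine Set.mem_iUnion.2 ⟨j, Set.mem_univ_pi.2 fun i => ?_⟩
    by_cases h : i = j
    · subst h; simp only [hI, if_pos rfl]; exact ⟨hj, (hbox i).2⟩
    · simp only [hI, if_neg h]; exact hbox i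
  have hvolI : ∀ j i, volume (I j i) < ⊤ := by
    intro j i; simp only [hI]; split_ifs <;> simp [Real.volume_Ioc, Real.volume_Icc]
  have hvolB : ∀ j, volume (B j) < ⊤ := by
    intro j
    rw [hB]
    simp only []
    rw [volume_pi_pi]
    exact ENNReal.prod_lt_top fun i _ => hvolI j i
  have hGmeas : Measurable G :=
    Finset.measurable_prod _ fun i _ => (gbd_meas b).comp (measurable_pi_apply i)
  have hG0 : ∀ u, 0 ≤ G u := fun u => Finset.prod_nonneg fun i _ => gbd_nonneg b (u i)
  have hGbd : ∀ u, G u ≤ C0 ^ m := by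
    intro u
    calc G u ≤ ∏ _i : Fin m, C0 :=
          Finset.prod_le_prod (fun i _ => gbd_nonneg b (u i)) fun i _ => gbd_le b (u i)
      _ = C0 ^ m := by rw [Finset.prod_const, Finset.card_univ, Fintype.card_fin]
  have hGint : ∀ j, Integrable G (volume.restrict (B j)) := by
    intro j
    refine Integrable.mono'
      ((integrableOn_const (hvolB j).ne) :
        IntegrableOn (fun _ => C0 ^ m) (B j) volume)
      hGmeas.aestronglyMeasurable (Filter.Eventually.of_forall fun u => ?_)
    rw [Real.norm_eq_abs, abs_of_nonneg (hG0 u)]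
    exact hGbd u
  set ν : Measure (Fin m → ℝ) := Measure.sum fun j => volume.restrict (B j) with hν
  have hle : volume.restrict S ≤ ν :=
    le_trans (Measure.restrict_mono hsub le_rfl) Measure.restrict_iUnion_le
  have hνint : Integrable G ν := by
    rw [hν, Measure.sum_fintype]
    exact integrable_finset_sum_measure.2 fun j _ => hGint j
  have hfG : ∀ u ∈ S, (∏ i, (1 - Real.exp (-b * u i)) / u i) ≤ G u := fun u hu =>
    Finset.prod_le_prod (fun i _ => h_nonneg b hb (hu.1 i).1) fun i _ =>
      h_le_gbd b hb (hu.1 i).1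
  have hf0 : ∀ u ∈ S, 0 ≤ ∏ i, (1 - Real.exp (-b * u i)) / u i := fun u hu =>
    Finset.prod_nonneg fun i _ => h_nonneg b hb (hu.1 i).1
  calc ∫ u in S, ∏ i, (1 - Real.exp (-b * u i)) / u i
      ≤ ∫ u in S, G u :=
        integral_mono_of_nonneg (ae_restrict_of_forall_mem hSmeas hf0)
          (hνint.mono_measure hle) (ae_restrict_of_forall_mem hSmeas hfG)
    _ ≤ ∫ u, G u ∂ν :=
        integral_mono_measure hle (Filter.Eventually.of_forall hG0) hνint
    _ = ∑ j, ∫ u in B j, G u := by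
        rw [hν, Measure.sum_fintype, integral_finset_sum_measure fun j _ => hGint j]
    _ = ∑ j, ∏ i, ∫ x in I j i, gbd b x := by
        refine Finset.sum_congr rfl fun j _ => ?_
        rw [← integral_indicator (hBmeas j)]
        have hind : (B j).indicator G =
            fun u => ∏ i, (I j i).indicator (gbd b) (u i) := by
          funext u
          by_cases hu : u ∈ B j
          · rw [Set.indicator_of_mem hu]
            exact Finset.prod_congr rfl fun i _ =>
              (Set.indicator_of_mem (hu i (Set.mem_univ i)) _).symm
          · rw [Set.indicator_of_notMem hu]
            have hex : ∃ i, u i ∉ I j i := by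
              by_contra hcon
              push_neg at hcon
              exact hu fun i _ => hcon i
            obtain ⟨i, hi⟩ := hex
            exact (Finset.prod_eq_zero (Finset.mem_univ i)
              (Set.indicator_of_notMem hi _)).symm
        rw [hind, MeasureTheory.integral_fintype_prod_volume_eq_prod
          (fun i x => (I j i).indicator (gbd b) x)]
        exact Finset.prod_congr rfl fun i _ => integral_indicator (hImeas j i)
    _ ≤ ∑ _j : Fin m, C0 * m * (C0 + n * t) ^ (m - 1) := by
        refine Finset.sum_le_sum fun j _ => ?_
        have hnonneg : ∀ i, 0 ≤ ∫ x in I j i, gbd b x := fun i =>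
          setIntegral_nonneg (hImeas j i) fun x _ => gbd_nonneg b x
        rw [← Finset.mul_prod_erase Finset.univ _ (Finset.mem_univ j)]
        have h1 : ∫ x in I j j, gbd b x ≤ C0 * m := by
          simp only [hI, if_pos rfl]
          exact integral_gbd_Ioc b hm hE1
        have h2 : (∏ i ∈ Finset.univ.erase j, ∫ x in I j i, gbd b x) ≤
            (C0 + n * t) ^ (m - 1) := by
          calc (∏ i ∈ Finset.univ.erase j, ∫ x in I j i, gbd b x)
              ≤ ∏ _i ∈ Finset.univ.erase j, (C0 + n * t) := by
                refine Finset.prod_le_prod (fun i _ => hnonneg i) fun i hi => ?_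
                have hij : i ≠ j := Finset.ne_of_mem_erase hi
                simp only [hI, if_neg hij]
                calc ∫ x in Set.Icc 0 E, gbd b x ≤ C0 + Real.log E :=
                      integral_gbd_Icc b hE1
                  _ = C0 + n * t := by rw [hEdef, Real.log_exp]
            _ = (C0 + n * t) ^ (m - 1) := by
                rw [Finset.prod_const, Finset.card_erase_of_mem (Finset.mem_univ j),
                  Finset.card_univ, Fintype.card_fin]
        exact mul_le_mul h1 h2 (Finset.prod_nonneg fun i _ => hnonneg i) (by positivity)
    _ = (m : ℝ) * (C0 * m * (C0 + n * t) ^ (m - 1)) := by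
        rw [Finset.sum_const, Finset.card_univ, Fintype.card_fin, nsmul_eq_mul]
    _ ≤ (m : ℝ) * (C0 * m) * (C0 + t) ^ (m - 1) * (n : ℝ) ^ (m - 1) := by
        have hn1 : (1 : ℝ) ≤ n := by exact_mod_cast hn
        have hkey : C0 + n * t ≤ (C0 + t) * n := by
          nlinarith [mul_nonneg (sub_nonneg.2 hn1) hC0pos.le]
        have hpow : (C0 + n * t) ^ (m - 1) ≤ ((C0 + t) * n) ^ (m - 1) :=
          pow_le_pow_left₀ (by positivity) hkey (m - 1)
        calc (m : ℝ) * (C0 * m * (C0 + n * t) ^ (m - 1))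
            ≤ (m : ℝ) * (C0 * m * ((C0 + t) * n) ^ (m - 1)) := by
              exact mul_le_mul_of_nonneg_left
                (mul_le_mul_of_nonneg_left hpow (by positivity)) hm0.le
          _ = (m : ℝ) * (C0 * m) * (C0 + t) ^ (m - 1) * (n : ℝ) ^ (m - 1) := by
              rw [mul_pow]; ring
end

section
/- For any t > 0 and m ≥ 1, the limit as n → ∞ of n^{-m} times the integral of ∏_{i=1}^m u_i^{-1} over the set { u : ∑ u_i < e^{nt}, u_1 ≥ 1, u_i ≥ n^{-m} for i ≥ 2 } equals t^m. -/
open MeasureTheory Filter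

section Helpers

lemma prod_ite_const {α : Type*} [Fintype α] [DecidableEq α] (i0 : α) (A B : ℝ) :
    ∏ i : α, (if i = i0 then A else B) = A * B ^ (Fintype.card α - 1) := by
  rw [← Finset.mul_prod_erase Finset.univ _ (Finset.mem_univ i0), if_pos rfl]
  congr 1
  rw [Finset.prod_congr rfl (fun i hi => if_neg (Finset.ne_of_mem_erase hi)),
    Finset.prod_const, Finset.card_erase_of_mem (Finset.mem_univ i0), Finset.card_univ]

lemma indicator_pi_prod_s5 {m : ℕ} (s : Fin m → Set ℝ) (g : ℝ → ℝ) (u : Fin m → ℝ) :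
    (Set.pi Set.univ s).indicator (fun u => ∏ i, g (u i)) u = ∏ i, (s i).indicator g (u i) := by
  by_cases h : u ∈ Set.pi Set.univ s
  · rw [Set.indicator_of_mem h]
    exact Finset.prod_congr rfl fun i _ => (Set.indicator_of_mem (h i (Set.mem_univ i)) g).symm
  · rw [Set.indicator_of_notMem h]
    rw [Set.mem_univ_pi] at h
    push_neg at h
    obtain ⟨i, hi⟩ := h
    exact (Finset.prod_eq_zero (Finset.mem_univ i) (Set.indicator_of_notMem hi g)).symm

lemma integrableOn_pi_prod {m : ℕ} (s : Fin m → Set ℝ) (hs : ∀ i, MeasurableSet (s i))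
    (g : ℝ → ℝ) (hg : ∀ i, IntegrableOn g (s i)) :
    IntegrableOn (fun u : Fin m → ℝ => ∏ i, g (u i)) (Set.pi Set.univ s) := by
  rw [← integrable_indicator_iff (MeasurableSet.univ_pi hs)]
  have : (Set.pi Set.univ s).indicator (fun u : Fin m → ℝ => ∏ i, g (u i)) =
      fun u : Fin m → ℝ => ∏ i, (s i).indicator g (u i) := funext (indicator_pi_prod_s5 s g)
  rw [this]
  exact Integrable.fintype_prod fun i => (integrable_indicator_iff (hs i)).2 (hg i)

lemma integral_pi_prod {m : ℕ} (s : Fin m → Set ℝ) (hs : ∀ i, MeasurableSet (s i))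
    (g : ℝ → ℝ) :
    ∫ u in Set.pi Set.univ s, ∏ i, g (u i) = ∏ i, ∫ x in s i, g x := by
  rw [← integral_indicator (MeasurableSet.univ_pi hs)]
  have : (Set.pi Set.univ s).indicator (fun u : Fin m → ℝ => ∏ i, g (u i)) =
      fun u : Fin m → ℝ => ∏ i, (s i).indicator g (u i) := funext (indicator_pi_prod_s5 s g)
  rw [this, integral_fintype_prod_volume_eq_prod (fun i => (s i).indicator g)]
  exact Finset.prod_congr rfl fun i _ => integral_indicator (hs i)

lemma integral_inv_Ioc {a b : ℝ} (ha : 0 < a) (hab : a ≤ b) :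
    ∫ x in Set.Ioc a b, x⁻¹ = Real.log (b / a) := by
  rw [← intervalIntegral.integral_of_le hab, integral_inv_of_pos ha (lt_of_lt_of_le ha hab)]

lemma integral_inv_Ico {a b : ℝ} (ha : 0 < a) (hab : a ≤ b) :
    ∫ x in Set.Ico a b, x⁻¹ = Real.log (b / a) := by
  rw [setIntegral_congr_set Ico_ae_eq_Ioc, integral_inv_Ioc ha hab]

lemma integrableOn_inv_Ico {a b : ℝ} (ha : 0 < a) :
    IntegrableOn (fun x : ℝ => x⁻¹) (Set.Ico a b) := by
  rcases le_or_gt a b with hab | hab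
  · have : ContinuousOn (fun x : ℝ => x⁻¹) (Set.Icc a b) := fun x hx =>
      (continuousAt_inv₀ (ne_of_gt (lt_of_lt_of_le ha hx.1))).continuousWithinAt
    exact (this.integrableOn_Icc).mono_set Set.Ico_subset_Icc_self
  · rw [Set.Ico_eq_empty (not_lt.2 hab.le)]; simp

lemma integrableOn_inv_Ioc {a b : ℝ} (ha : 0 < a) :
    IntegrableOn (fun x : ℝ => x⁻¹) (Set.Ioc a b) := by
  rcases le_or_gt a b with hab | hab
  · have : ContinuousOn (fun x : ℝ => x⁻¹) (Set.Icc a b) := fun x hx =>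
      (continuousAt_inv₀ (ne_of_gt (lt_of_lt_of_le ha hx.1))).continuousWithinAt
    exact (this.integrableOn_Icc).mono_set Set.Ioc_subset_Icc_self
  · rw [Set.Ioc_eq_empty (not_lt.2 hab.le)]; simp

lemma tendsto_log_nat_div : Tendsto (fun n : ℕ => Real.log n / n) atTop (nhds 0) :=
  (Real.isLittleO_log_id_atTop.tendsto_div_nhds_zero).comp tendsto_natCast_atTop_atTop

lemma aux_lim (t c : ℝ) (m : ℕ) (hm : 1 ≤ m) :
    Tendsto (fun n : ℕ => (n : ℝ) ^ (-(m : ℤ)) *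
      (((n : ℝ) * t + c) * ((n : ℝ) * t + c + m * Real.log n) ^ (m - 1)))
      atTop (nhds (t ^ m)) := by
  obtain ⟨k, rfl⟩ : ∃ k, m = k + 1 := ⟨m - 1, (Nat.succ_pred_eq_of_pos hm).symm⟩
  have hinv : Tendsto (fun n : ℕ => (n : ℝ)⁻¹) atTop (nhds 0) :=
    tendsto_inv_atTop_zero.comp tendsto_natCast_atTop_atTop
  have h1 : Tendsto (fun n : ℕ => t + c * (n : ℝ)⁻¹) atTop (nhds t) := by
    have := (hinv.const_mul c).const_add t
    simpa using this
  have h2 : Tendsto (fun n : ℕ => t + c * (n : ℝ)⁻¹ + (k + 1 : ℕ) * (Real.log n / n))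
      atTop (nhds t) := by
    have := h1.add (tendsto_log_nat_div.const_mul ((k + 1 : ℕ) : ℝ))
    simpa using this
  have hmain : Tendsto (fun n : ℕ =>
      (t + c * (n : ℝ)⁻¹) * (t + c * (n : ℝ)⁻¹ + (k + 1 : ℕ) * (Real.log n / n)) ^ k)
      atTop (nhds (t ^ (k + 1))) := by
    have := h1.mul (h2.pow k)
    simpa [pow_succ, mul_comm] using this
  refine hmain.congr' ?_
  filter_upwards [eventually_ge_atTop 1] with n hn
  have hn0 : (0 : ℝ) < (n : ℝ) := by exact_mod_cast hn
  have hne : (n : ℝ) ≠ 0 := hn0.ne'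
  rw [zpow_neg, zpow_natCast]
  simp only [Nat.add_sub_cancel]
  field_simp
  rw [div_pow, pow_succ]
  field_simp

end Helpers

/-- `n^{-m} ∫_{O_m(n)} ∏ uᵢ⁻¹ du → t^m` where
`O_m(n) = {u : ∑ uᵢ < e^{nt}, u₁ ≥ 1, uᵢ ≥ n^{-m} for i ≥ 2}`. -/
theorem inverse_product_integral_limit (t : ℝ) (ht : 0 < t) (m : ℕ) (hm : 1 ≤ m) :
    Tendsto (fun n : ℕ =>
        (n : ℝ) ^ (-(m : ℤ)) *
          ∫ u in {u : Fin m → ℝ | ∑ i, u i < Real.exp (n * t) ∧ 1 ≤ u ⟨0, hm⟩ ∧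
              ∀ i : Fin m, i ≠ ⟨0, hm⟩ → (n : ℝ) ^ (-(m : ℤ)) ≤ u i},
            ∏ i, (u i)⁻¹)
      atTop (nhds (t ^ m)) := by
  set i0 : Fin m := ⟨0, hm⟩ with hi0
  set cl : ℝ := -Real.log ((m : ℝ) + 1) with hcl
  -- eventual bounds
  have hexp : Tendsto (fun n : ℕ => Real.exp ((n : ℝ) * t)) atTop atTop :=
    Real.tendsto_exp_atTop.comp ((tendsto_natCast_atTop_atTop).atTop_mul_const ht)
  have key : ∀ᶠ n : ℕ in atTop,
      ((n : ℝ) ^ (-(m : ℤ)) *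
        (((n : ℝ) * t + cl) * ((n : ℝ) * t + cl + m * Real.log n) ^ (m - 1)) ≤
      (n : ℝ) ^ (-(m : ℤ)) *
          ∫ u in {u : Fin m → ℝ | ∑ i, u i < Real.exp (n * t) ∧ 1 ≤ u i0 ∧
              ∀ i : Fin m, i ≠ i0 → (n : ℝ) ^ (-(m : ℤ)) ≤ u i},
            ∏ i, (u i)⁻¹) ∧
      ((n : ℝ) ^ (-(m : ℤ)) *
          ∫ u in {u : Fin m → ℝ | ∑ i, u i < Real.exp (n * t) ∧ 1 ≤ u i0 ∧
              ∀ i : Fin m, i ≠ i0 → (n : ℝ) ^ (-(m : ℤ)) ≤ u i},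
            ∏ i, (u i)⁻¹ ≤
        (n : ℝ) ^ (-(m : ℤ)) *
        (((n : ℝ) * t + 0) * ((n : ℝ) * t + 0 + m * Real.log n) ^ (m - 1))) := by
    filter_upwards [eventually_ge_atTop 1, hexp.eventually_ge_atTop ((m : ℝ) + 1)]
      with n hn1 hn2
    set En : ℝ := Real.exp ((n : ℝ) * t) with hEn
    set an : ℝ := (n : ℝ) ^ (-(m : ℤ)) with han
    have hn0 : (0 : ℝ) < (n : ℝ) := by exact_mod_cast hn1
    have han0 : 0 < an := zpow_pos hn0 _
    have han1 : an ≤ 1 := by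
      rw [han, zpow_neg, zpow_natCast]
      exact inv_le_one_of_one_le₀ (one_le_pow₀ (by exact_mod_cast hn1))
    have hm1 : (0 : ℝ) < (m : ℝ) + 1 := by positivity
    have hE0 : 0 < En := Real.exp_pos _
    have hb1 : 1 ≤ En / ((m : ℝ) + 1) := (one_le_div hm1).2 hn2
    have hb0 : 0 < En / ((m : ℝ) + 1) := lt_of_lt_of_le one_pos hb1
    have hbE : En / ((m : ℝ) + 1) ≤ En :=
      div_le_self hE0.le (le_add_of_nonneg_left (Nat.cast_nonneg m))
    set c : Fin m → ℝ := fun i => if i = i0 then 1 else an with hc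
    have hc_pos : ∀ i, 0 < c i := by
      intro i; by_cases hi : i = i0 <;> simp [hc, hi, han0]
    have hc1 : ∀ i, c i ≤ 1 := by
      intro i; by_cases hi : i = i0 <;> simp [hc, hi, han1]
    have hcb : ∀ i, c i ≤ En / ((m : ℝ) + 1) := fun i => (hc1 i).trans hb1
    have hcE : ∀ i, c i ≤ En := fun i => (hcb i).trans hbE
    set O : Set (Fin m → ℝ) := {u : Fin m → ℝ | ∑ i, u i < En ∧ 1 ≤ u i0 ∧
        ∀ i : Fin m, i ≠ i0 → an ≤ u i} with hO
    set L : Set (Fin m → ℝ) := Set.pi Set.univ fun i => Set.Ioc (c i) (En / ((m : ℝ) + 1))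
      with hL
    set U : Set (Fin m → ℝ) := Set.pi Set.univ fun i => Set.Ico (c i) En with hU
    -- positivity of coordinates on O
    have hOpos : ∀ u ∈ O, ∀ i, 0 < u i := by
      intro u hu i
      by_cases hi : i = i0
      · exact lt_of_lt_of_le one_pos (hi ▸ hu.2.1)
      · exact lt_of_lt_of_le han0 (hu.2.2 i hi)
    -- inclusions
    have hLO : L ⊆ O := by
      intro u hu
      refine ⟨?_, ?_, ?_⟩
      · calc ∑ i, u i ≤ ∑ _i : Fin m, En / ((m : ℝ) + 1) :=
              Finset.sum_le_sum fun i _ => (hu i (Set.mem_univ i)).2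
          _ = (m : ℝ) * (En / ((m : ℝ) + 1)) := by
              rw [Finset.sum_const, Finset.card_univ, Fintype.card_fin, nsmul_eq_mul]
          _ < En := by
              rw [mul_div_assoc', div_lt_iff₀ hm1]
              nlinarith [hE0]
      · have := (hu i0 (Set.mem_univ i0)).1
        simpa [hc] using this.le
      · intro i hi
        have := (hu i (Set.mem_univ i)).1
        simp only [hc, if_neg hi] at this
        exact this.le
    have hOU : O ⊆ U := by
      intro u hu i _
      refine ⟨?_, ?_⟩
      · by_cases hi : i = i0
        · simpa [hc, hi] using (hi ▸ hu.2.1)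
        · simpa [hc, hi] using hu.2.2 i hi
      · exact lt_of_le_of_lt
          (Finset.single_le_sum (fun j _ => (hOpos u hu j).le) (Finset.mem_univ i)) hu.1
    -- measurability
    have hOmeas : MeasurableSet O := by
      have h1 : MeasurableSet {u : Fin m → ℝ | ∑ i, u i < En} :=
        measurableSet_lt (Finset.measurable_sum _ fun i _ => measurable_pi_apply i)
          measurable_const
      have h2 : MeasurableSet {u : Fin m → ℝ | 1 ≤ u i0} :=
        measurableSet_le measurable_const (measurable_pi_apply i0)
      have h3 : MeasurableSet {u : Fin m → ℝ | ∀ i : Fin m, i ≠ i0 → an ≤ u i} := by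
        rw [Set.setOf_forall]
        refine MeasurableSet.iInter fun i => ?_
        by_cases hi : i = i0
        · simp [hi]
        · simp only [hi, ne_eq, not_false_iff, forall_true_left]
          exact measurableSet_le measurable_const (measurable_pi_apply i)
      have : O = {u : Fin m → ℝ | ∑ i, u i < En} ∩ ({u : Fin m → ℝ | 1 ≤ u i0} ∩
          {u : Fin m → ℝ | ∀ i : Fin m, i ≠ i0 → an ≤ u i}) := by
        ext u; simp [hO, Set.mem_setOf_eq, and_assoc]
      rw [this]
      exact h1.inter (h2.inter h3)
    have hUmeas : MeasurableSet U := MeasurableSet.univ_pi fun i => measurableSet_Ico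
    -- integrability
    have hUint : IntegrableOn (fun u : Fin m → ℝ => ∏ i, (u i)⁻¹) U :=
      integrableOn_pi_prod _ (fun i => measurableSet_Ico) _
        (fun i => integrableOn_inv_Ico (hc_pos i))
    have hOint : IntegrableOn (fun u : Fin m → ℝ => ∏ i, (u i)⁻¹) O := hUint.mono_set hOU
    -- nonnegativity
    have nonnegO : 0 ≤ᵐ[volume.restrict O] fun u : Fin m → ℝ => ∏ i, (u i)⁻¹ :=
      (ae_restrict_mem hOmeas).mono fun u hu =>
        Finset.prod_nonneg fun i _ => inv_nonneg.2 (hOpos u hu i).le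
    have nonnegU : 0 ≤ᵐ[volume.restrict U] fun u : Fin m → ℝ => ∏ i, (u i)⁻¹ :=
      (ae_restrict_mem hUmeas).mono fun u hu =>
        Finset.prod_nonneg fun i _ => inv_nonneg.2 (lt_of_lt_of_le (hc_pos i) (hu i (Set.mem_univ i)).1).le
    -- integral comparisons
    have int1 : ∫ u in L, ∏ i, (u i)⁻¹ ≤ ∫ u in O, ∏ i, (u i)⁻¹ :=
      setIntegral_mono_set hOint nonnegO hLO.eventuallyLE
    have int2 : ∫ u in O, ∏ i, (u i)⁻¹ ≤ ∫ u in U, ∏ i, (u i)⁻¹ :=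
      setIntegral_mono_set hUint nonnegU hOU.eventuallyLE
    -- value of the lower integral
    have hLval : ∫ u in L, ∏ i, (u i)⁻¹ =
        ((n : ℝ) * t + cl) * ((n : ℝ) * t + cl + m * Real.log n) ^ (m - 1) := by
      rw [hL, integral_pi_prod _ (fun i => measurableSet_Ioc) (fun x => x⁻¹)]
      have heach : ∀ i : Fin m, (∫ x in Set.Ioc (c i) (En / ((m : ℝ) + 1)), x⁻¹) =
          if i = i0 then (n : ℝ) * t + cl else (n : ℝ) * t + cl + m * Real.log n := by
        intro i
        rw [integral_inv_Ioc (hc_pos i) (hcb i)]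
        by_cases hi : i = i0
        · rw [if_pos hi]
          simp only [hc, if_pos hi]
          rw [div_one, Real.log_div hE0.ne' hm1.ne', hEn, Real.log_exp, hcl]
          ring
        · rw [if_neg hi]
          simp only [hc, if_neg hi]
          rw [Real.log_div hb0.ne' han0.ne', Real.log_div hE0.ne' hm1.ne', hEn, Real.log_exp,
            han, Real.log_zpow, hcl]
          push_cast
          ring
      rw [Finset.prod_congr rfl (fun i _ => heach i), prod_ite_const i0, Fintype.card_fin]
    -- value of the upper integral
    have hUval : ∫ u in U, ∏ i, (u i)⁻¹ =
        ((n : ℝ) * t + 0) * ((n : ℝ) * t + 0 + m * Real.log n) ^ (m - 1) := by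
      rw [hU, integral_pi_prod _ (fun i => measurableSet_Ico) (fun x => x⁻¹)]
      have heach : ∀ i : Fin m, (∫ x in Set.Ico (c i) En, x⁻¹) =
          if i = i0 then (n : ℝ) * t + 0 else (n : ℝ) * t + 0 + m * Real.log n := by
        intro i
        rw [integral_inv_Ico (hc_pos i) (hcE i)]
        by_cases hi : i = i0
        · rw [if_pos hi]
          simp only [hc, if_pos hi]
          rw [div_one, hEn, Real.log_exp]
          ring
        · rw [if_neg hi]
          simp only [hc, if_neg hi]
          rw [Real.log_div hE0.ne' han0.ne', hEn, Real.log_exp, han, Real.log_zpow]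
          push_cast
          ring
      rw [Finset.prod_congr rfl (fun i _ => heach i), prod_ite_const i0, Fintype.card_fin]
    have hannn : (0 : ℝ) ≤ (n : ℝ) ^ (-(m : ℤ)) := zpow_nonneg (Nat.cast_nonneg n) _
    constructor
    · rw [← hLval]
      exact mul_le_mul_of_nonneg_left int1 hannn
    · rw [← hUval]
      exact mul_le_mul_of_nonneg_left int2 hannn
  exact tendsto_of_tendsto_of_tendsto_of_le_of_le' (aux_lim t cl m hm) (aux_lim t 0 m hm)
    (key.mono fun n h => h.1) (key.mono fun n h => h.2)
end

section
/- Let f be integrable with f̂ its Fourier transform satisfying |f̂(y)| ≤ C min(|y|, 1) and ∫_ℝ |f̂(y)| |y|^{-1} dy < ∞. Then for every n ≥ 1 and t > 0: (1/n) ∫_1^{e^{nt}} ∫_1^{s_2} ∫_{ℝ²} |f̂(y_1 - y_2)| |f̂(y_2)| e^{-|y_2|(s_2 - s_1) - |y_1| s_1} dy ds ≤ c · t for a constant c depending only on f. -/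
open MeasureTheory

/-- The Fourier transform `f̂(ξ) = ∫ e^{iξx} f(x) dx`. -/
noncomputable def fourierTransform (f : ℝ → ℝ) (ξ : ℝ) : ℂ :=
  ∫ x : ℝ, Complex.exp (Complex.I * ξ * x) * f x

section TightnessHelpers

open Set Real
open scoped ENNReal

lemma int_exp_Ioi (c : ℝ) {a : ℝ} (ha : 0 < a) :
    ∫ x in Ioi c, Real.exp (-(a * x)) = Real.exp (-(a * c)) / a := by
  have := integral_comp_mul_left_Ioi (fun y => Real.exp (-y)) c ha
  simp only [smul_eq_mul] at this
  rw [this, integral_exp_neg_Ioi]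
  ring

lemma integrableOn_exp_shift {a : ℝ} (ha : 0 < a) (s1 : ℝ) :
    IntegrableOn (fun s2 : ℝ => Real.exp (-(a * (s2 - s1)))) (Ioi s1) := by
  have : (fun s2 : ℝ => Real.exp (-(a * (s2 - s1)))) =
      fun s2 => Real.exp (a * s1) * Real.exp (-a * s2) := by
    funext s2; rw [← Real.exp_add]; ring_nf
  rw [this]
  exact (exp_neg_integrableOn_Ioi s1 ha).const_mul _

lemma int_exp_shift {a : ℝ} (ha : 0 < a) (s1 : ℝ) :
    ∫ s2 in Ioi s1, Real.exp (-(a * (s2 - s1))) = 1 / a := by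
  have h : (fun s2 : ℝ => Real.exp (-(a * (s2 - s1)))) =
      fun s2 => Real.exp (a * s1) * Real.exp (-(a * s2)) := by
    funext s2; rw [← Real.exp_add]; ring_nf
  rw [h, integral_const_mul, int_exp_Ioi _ ha, ← mul_div_assoc, ← Real.exp_add]
  simp

lemma integrable_exp_neg_abs_mul {a : ℝ} (ha : 0 < a) :
    Integrable (fun x : ℝ => Real.exp (-(|x| * a))) := by
  have hIoi : IntegrableOn (fun x : ℝ => Real.exp (-(|x| * a))) (Ioi 0) := by
    apply (exp_neg_integrableOn_Ioi 0 ha).congr_fun _ measurableSet_Ioi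
    intro x hx
    simp only []
    rw [abs_of_pos hx]; ring_nf
  have hIic : IntegrableOn (fun x : ℝ => Real.exp (-(|x| * a))) (Iic 0) := by
    rw [← Measure.map_neg_eq_self (volume : Measure ℝ)]
    have m : MeasurableEmbedding fun x : ℝ => -x := (Homeomorph.neg ℝ).measurableEmbedding
    rw [m.integrableOn_map_iff]
    simp_rw [Function.comp_def, abs_neg, neg_preimage, neg_Iic, neg_zero]
    exact (integrableOn_Ici_iff_integrableOn_Ioi (f := fun x : ℝ => Real.exp (-(|x| * a)))).mpr hIoi
  rw [← integrableOn_univ, ← Iic_union_Ioi (a := (0:ℝ))]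
  exact hIic.union hIoi

lemma integral_exp_neg_abs_mul {a : ℝ} (ha : 0 < a) :
    ∫ x : ℝ, Real.exp (-(|x| * a)) = 2 / a := by
  rw [integral_comp_abs (f := fun y => Real.exp (-(y * a)))]
  have : ∀ x ∈ Ioi (0:ℝ), Real.exp (-(x * a)) = Real.exp (-(a * x)) := by
    intro x _; ring_nf
  rw [setIntegral_congr_fun measurableSet_Ioi this, int_exp_Ioi 0 ha]
  simp; ring

lemma fourierTransform_continuous {f : ℝ → ℝ} (hf : Integrable f) :
    Continuous (fourierTransform f) := by
  apply continuous_of_dominated (bound := fun x => |f x|)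
  · intro ξ
    exact ((Complex.continuous_exp.comp (by continuity)).aestronglyMeasurable).mul
      (Complex.continuous_ofReal.comp_aestronglyMeasurable hf.1)
  · intro ξ
    filter_upwards with x
    rw [norm_mul]
    have h1 : ‖Complex.exp (Complex.I * ξ * x)‖ = 1 := by
      rw [Complex.norm_exp]
      simp [Complex.mul_re, Complex.mul_im]
    rw [h1, one_mul, Complex.norm_real, Real.norm_eq_abs]
  · exact hf.abs
  · filter_upwards with x
    exact Continuous.mul (by continuity) continuous_const

theorem tightness_aux (g : ℝ → ℝ) (C : ℝ) (hgc : Continuous g)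
    (hg0 : ∀ y, 0 ≤ g y) (hgle : ∀ y : ℝ, g y ≤ C * min |y| 1)
    (hint : Integrable (fun y : ℝ => g y / |y|)) :
    ∃ c : ℝ, ∀ n : ℕ, 1 ≤ n → ∀ t : ℝ, 0 < t →
      (1 / (n : ℝ)) * ∫ s2 in (1:ℝ)..Real.exp (n * t), ∫ s1 in (1:ℝ)..s2,
        ∫ y : ℝ × ℝ, g (y.1 - y.2) * g y.2 * Real.exp (-(|y.2| * (s2 - s1)) - |y.1| * s1)
      ≤ c * t := by
  have hC : 0 ≤ C := le_trans (hg0 1) (by simpa using hgle 1)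
  have hgC : ∀ y, g y ≤ C := fun y => (hgle y).trans (by
    calc C * min |y| 1 ≤ C * 1 := mul_le_mul_of_nonneg_left (min_le_right _ _) hC
    _ = C := mul_one C)
  have hg00 : g 0 = 0 := le_antisymm (by simpa using hgle 0) (hg0 0)
  set M : ℝ := ∫ y : ℝ, g y / |y| with hMdef
  have hM0 : 0 ≤ M := integral_nonneg fun y => div_nonneg (hg0 y) (abs_nonneg y)
  refine ⟨2 * C * M, ?_⟩
  intro n hn t ht
  have hn1 : (1:ℝ) ≤ (n:ℝ) := by exact_mod_cast hn
  have hnt : 0 < (n:ℝ) * t := mul_pos (lt_of_lt_of_le one_pos hn1) ht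
  set T : ℝ := Real.exp ((n:ℝ) * t) with hTdef
  have hT1 : 1 < T := by
    have := Real.add_one_le_exp ((n:ℝ) * t); rw [hTdef]; linarith
  -- key objects
  set P : ℝ → ℝ → ℝ≥0∞ := fun s1 s2 => ∫⁻ y : ℝ × ℝ, ENNReal.ofReal
    (g (y.1 - y.2) * g y.2 * Real.exp (-(|y.2| * (s2 - s1)) - |y.1| * s1)) with hPdef
  set L : ℝ → ℝ≥0∞ := fun u => ∫⁻ y2 : ℝ,
    ENNReal.ofReal (g y2 * Real.exp (-(|y2| * u))) with hLdef
  set Q : ℝ → ℝ≥0∞ := fun s2 => ∫⁻ s1 in Ioc 1 s2, P s1 s2 with hQdef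
  set W : ℝ × ℝ → ℝ≥0∞ := fun p => Set.indicator {q : ℝ × ℝ | q.1 ≤ q.2}
    (fun q => ENNReal.ofReal (2 * C / q.1) * L (q.2 - q.1)) p with hWdef
  -- measurability
  have hmeas_core : Measurable fun q : (ℝ × ℝ) × (ℝ × ℝ) => ENNReal.ofReal
      (g (q.2.1 - q.2.2) * g q.2.2 *
        Real.exp (-(|q.2.2| * (q.1.2 - q.1.1)) - |q.2.1| * q.1.1)) := by
    apply ENNReal.measurable_ofReal.comp
    apply Continuous.measurable
    fun_prop
  have hPmeas : Measurable fun p : ℝ × ℝ => P p.1 p.2 := hmeas_core.lintegral_prod_right'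
  have hmeas_core2 : Measurable fun q : (ℝ × ℝ) × ℝ => ENNReal.ofReal
      (g q.2 * Real.exp (-(|q.2| * (q.1.2 - q.1.1)))) := by
    apply ENNReal.measurable_ofReal.comp
    apply Continuous.measurable
    fun_prop
  have hLmeas : Measurable fun p : ℝ × ℝ => L (p.2 - p.1) := hmeas_core2.lintegral_prod_right'
  have hWmeas : Measurable W := by
    apply Measurable.indicator
    · exact ((measurable_const.div measurable_fst).ennreal_ofReal).mul hLmeas
    · exact measurableSet_le measurable_fst measurable_snd
  -- Step A : pointwise bound on P
  have hStepA : ∀ s1 s2 : ℝ, 0 < s1 → s1 ≤ s2 →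
      P s1 s2 ≤ ENNReal.ofReal (2 * C / s1) * L (s2 - s1) := by
    intro s1 s2 hs1 hs12
    have hpt : ∀ y : ℝ × ℝ, g (y.1 - y.2) * g y.2 * Real.exp (-(|y.2| * (s2 - s1)) - |y.1| * s1)
        ≤ (C * Real.exp (-(|y.1| * s1))) * (g y.2 * Real.exp (-(|y.2| * (s2 - s1)))) := by
      intro y
      have hexp : Real.exp (-(|y.2| * (s2 - s1)) - |y.1| * s1)
          = Real.exp (-(|y.2| * (s2 - s1))) * Real.exp (-(|y.1| * s1)) := by
        rw [← Real.exp_add]; ring_nf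
      calc g (y.1 - y.2) * g y.2 * Real.exp (-(|y.2| * (s2 - s1)) - |y.1| * s1)
          = g (y.1 - y.2) * (g y.2 * Real.exp (-(|y.2| * (s2 - s1)))
              * Real.exp (-(|y.1| * s1))) := by rw [hexp]; ring
        _ ≤ C * (g y.2 * Real.exp (-(|y.2| * (s2 - s1))) * Real.exp (-(|y.1| * s1))) := by
            apply mul_le_mul_of_nonneg_right (hgC _)
            have := hg0 y.2; positivity
        _ = (C * Real.exp (-(|y.1| * s1))) * (g y.2 * Real.exp (-(|y.2| * (s2 - s1)))) := by ring
    have h1 : P s1 s2 ≤ ∫⁻ y : ℝ × ℝ, ENNReal.ofReal ((C * Real.exp (-(|y.1| * s1)))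
        * (g y.2 * Real.exp (-(|y.2| * (s2 - s1))))) :=
      lintegral_mono fun y => ENNReal.ofReal_le_ofReal (hpt y)
    have h2 : (∫⁻ y : ℝ × ℝ, ENNReal.ofReal ((C * Real.exp (-(|y.1| * s1)))
        * (g y.2 * Real.exp (-(|y.2| * (s2 - s1))))))
        = (∫⁻ y1 : ℝ, ENNReal.ofReal (C * Real.exp (-(|y1| * s1)))) * L (s2 - s1) := by
      have hc : ∀ y : ℝ × ℝ, ENNReal.ofReal ((C * Real.exp (-(|y.1| * s1)))
          * (g y.2 * Real.exp (-(|y.2| * (s2 - s1)))))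
          = ENNReal.ofReal (C * Real.exp (-(|y.1| * s1)))
            * ENNReal.ofReal (g y.2 * Real.exp (-(|y.2| * (s2 - s1)))) := fun y =>
        ENNReal.ofReal_mul (by positivity)
      rw [lintegral_congr hc, Measure.volume_eq_prod]
      have hm1 : AEMeasurable (fun y1 : ℝ => ENNReal.ofReal (C * Real.exp (-(|y1| * s1)))) volume :=
        (ENNReal.measurable_ofReal.comp (Continuous.measurable (by fun_prop))).aemeasurable
      have hm2 : AEMeasurable
          (fun y2 : ℝ => ENNReal.ofReal (g y2 * Real.exp (-(|y2| * (s2 - s1))))) volume :=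
        (ENNReal.measurable_ofReal.comp (Continuous.measurable (by fun_prop))).aemeasurable
      exact lintegral_prod_mul hm1 hm2
    have h3 : (∫⁻ y1 : ℝ, ENNReal.ofReal (C * Real.exp (-(|y1| * s1))))
        = ENNReal.ofReal (2 * C / s1) := by
      rw [← ofReal_integral_eq_lintegral_ofReal ((integrable_exp_neg_abs_mul hs1).const_mul C)
        (ae_of_all _ fun x => by positivity)]
      rw [integral_const_mul, integral_exp_neg_abs_mul hs1]
      congr 1
      ring
    calc P s1 s2 ≤ _ := h1
      _ = _ := h2
      _ = ENNReal.ofReal (2 * C / s1) * L (s2 - s1) := by rw [h3]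
  -- tail bound for the s2 integral of L
  have hJ : ∀ s1 : ℝ, ∫⁻ s2 in Ioi s1, L (s2 - s1) ≤ ENNReal.ofReal M := by
    intro s1
    have hswap : (∫⁻ s2 in Ioi s1, L (s2 - s1)) = ∫⁻ y2 : ℝ, ∫⁻ s2 in Ioi s1,
        ENNReal.ofReal (g y2 * Real.exp (-(|y2| * (s2 - s1)))) := by
      apply lintegral_lintegral_swap
      exact (ENNReal.measurable_ofReal.comp (Continuous.measurable
        (show Continuous fun q : ℝ × ℝ => g q.2 * Real.exp (-(|q.2| * (q.1 - s1))) by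
          fun_prop))).aemeasurable
    rw [hswap]
    have hbd : ∀ y2 : ℝ, (∫⁻ s2 in Ioi s1,
        ENNReal.ofReal (g y2 * Real.exp (-(|y2| * (s2 - s1)))))
        ≤ ENNReal.ofReal (g y2 / |y2|) := by
      intro y2
      by_cases hy : y2 = 0
      · subst hy
        simp [hg00]
      · have ha : 0 < |y2| := abs_pos.mpr hy
        have h1 : ∀ s2 : ℝ, ENNReal.ofReal (g y2 * Real.exp (-(|y2| * (s2 - s1))))
            = ENNReal.ofReal (g y2) * ENNReal.ofReal (Real.exp (-(|y2| * (s2 - s1)))) :=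
          fun s2 => ENNReal.ofReal_mul (hg0 y2)
        calc (∫⁻ s2 in Ioi s1, ENNReal.ofReal (g y2 * Real.exp (-(|y2| * (s2 - s1)))))
            = ENNReal.ofReal (g y2) * ∫⁻ s2 in Ioi s1,
              ENNReal.ofReal (Real.exp (-(|y2| * (s2 - s1)))) := by
              rw [lintegral_congr h1]
              exact lintegral_const_mul' _ _ ENNReal.ofReal_ne_top
          _ = ENNReal.ofReal (g y2) * ENNReal.ofReal (1 / |y2|) := by
              rw [← ofReal_integral_eq_lintegral_ofReal (integrableOn_exp_shift ha s1)
                (ae_of_all _ fun x => (Real.exp_pos _).le), int_exp_shift ha s1]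
          _ = ENNReal.ofReal (g y2 / |y2|) := by
              rw [← ENNReal.ofReal_mul (hg0 y2), mul_one_div]
          _ ≤ ENNReal.ofReal (g y2 / |y2|) := le_refl _
    calc (∫⁻ y2 : ℝ, ∫⁻ s2 in Ioi s1, ENNReal.ofReal (g y2 * Real.exp (-(|y2| * (s2 - s1)))))
        ≤ ∫⁻ y2 : ℝ, ENNReal.ofReal (g y2 / |y2|) := lintegral_mono hbd
      _ = ENNReal.ofReal M := by
          rw [← ofReal_integral_eq_lintegral_ofReal hint
            (ae_of_all _ fun y => div_nonneg (hg0 y) (abs_nonneg y))]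
  -- core estimate
  have hS : ∫⁻ s2 in Ioc 1 T, Q s2 ≤ ENNReal.ofReal (2 * C * M * ((n:ℝ) * t)) := by
    have step12 : ∀ s2 ∈ Ioc (1:ℝ) T, Q s2 ≤ ∫⁻ s1 in Ioc 1 T, W (s1, s2) := by
      intro s2 hs2
      have hmono : Q s2 ≤ ∫⁻ s1 in Ioc 1 s2, ENNReal.ofReal (2 * C / s1) * L (s2 - s1) := by
        refine lintegral_mono_ae ?_
        refine (ae_restrict_iff' measurableSet_Ioc).2 (ae_of_all _ fun s1 hs1 => ?_)
        exact hStepA s1 s2 (lt_trans one_pos hs1.1) hs1.2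
      have heqW : (∫⁻ s1 in Ioc 1 T, W (s1, s2))
          = ∫⁻ s1 in Ioc 1 s2, ENNReal.ofReal (2 * C / s1) * L (s2 - s1) := by
        have hfun : (fun s1 => W (s1, s2)) = (Iic s2).indicator
            (fun s1 => ENNReal.ofReal (2 * C / s1) * L (s2 - s1)) := by
          funext s1
          by_cases h : s1 ≤ s2 <;>
            simp [hWdef, Set.indicator_apply, Set.mem_setOf_eq, h]
        rw [hfun, lintegral_indicator measurableSet_Iic,
          Measure.restrict_restrict measurableSet_Iic, Set.inter_comm, Set.Ioc_inter_Iic,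
          min_eq_right hs2.2]
      rw [heqW]
      exact hmono
    have step3 : (∫⁻ s2 in Ioc 1 T, Q s2)
        ≤ ∫⁻ s2 in Ioc 1 T, ∫⁻ s1 in Ioc 1 T, W (s1, s2) :=
      lintegral_mono_ae ((ae_restrict_iff' measurableSet_Ioc).2 (ae_of_all _ step12))
    have step4 : (∫⁻ s2 in Ioc 1 T, ∫⁻ s1 in Ioc 1 T, W (s1, s2))
        = ∫⁻ s1 in Ioc 1 T, ∫⁻ s2 in Ioc 1 T, W (s1, s2) :=
      lintegral_lintegral_swap ((hWmeas.comp measurable_swap).aemeasurable)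
    have step5 : ∀ s1 ∈ Ioc (1:ℝ) T, (∫⁻ s2 in Ioc 1 T, W (s1, s2))
        ≤ ENNReal.ofReal (2 * C / s1) * ENNReal.ofReal M := by
      intro s1 _
      have hfun : (fun s2 => W (s1, s2)) = (Ici s1).indicator
          (fun s2 => ENNReal.ofReal (2 * C / s1) * L (s2 - s1)) := by
        funext s2
        by_cases h : s1 ≤ s2 <;>
          simp [hWdef, Set.indicator_apply, Set.mem_setOf_eq, h]
      rw [hfun, lintegral_indicator measurableSet_Ici,
        Measure.restrict_restrict measurableSet_Ici]
      calc (∫⁻ s2 in Ici s1 ∩ Ioc 1 T, ENNReal.ofReal (2 * C / s1) * L (s2 - s1))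
          ≤ ∫⁻ s2 in Ici s1, ENNReal.ofReal (2 * C / s1) * L (s2 - s1) :=
            lintegral_mono_set Set.inter_subset_left
        _ = ∫⁻ s2 in Ioi s1, ENNReal.ofReal (2 * C / s1) * L (s2 - s1) := by
            rw [← Measure.restrict_congr_set Ioi_ae_eq_Ici]
        _ = ENNReal.ofReal (2 * C / s1) * ∫⁻ s2 in Ioi s1, L (s2 - s1) :=
            lintegral_const_mul' _ _ ENNReal.ofReal_ne_top
        _ ≤ ENNReal.ofReal (2 * C / s1) * ENNReal.ofReal M :=
            mul_le_mul_right (hJ s1) _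
    have hlogT : Real.log T = (n:ℝ) * t := Real.log_exp _
    have hint1 : IntegrableOn (fun s1 : ℝ => 2 * C / s1) (Ioc 1 T) := by
      apply (ContinuousOn.integrableOn_compact isCompact_Icc ?_).mono_set Ioc_subset_Icc_self
      intro s hs
      exact (ContinuousAt.div continuousAt_const continuousAt_id
        (ne_of_gt (lt_of_lt_of_le one_pos hs.1))).continuousWithinAt
    have hval : (∫ s1 in Ioc 1 T, 2 * C / s1) = 2 * C * ((n:ℝ) * t) := by
      simp_rw [div_eq_mul_inv]
      rw [integral_const_mul, ← intervalIntegral.integral_of_le hT1.le,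
        integral_inv_of_pos one_pos (lt_trans one_pos hT1), div_one, hlogT]
    have step6 : (∫⁻ s1 in Ioc 1 T, ENNReal.ofReal (2 * C / s1) * ENNReal.ofReal M)
        ≤ ENNReal.ofReal (2 * C * M * ((n:ℝ) * t)) := by
      rw [lintegral_mul_const' _ _ ENNReal.ofReal_ne_top]
      rw [← ofReal_integral_eq_lintegral_ofReal hint1
        ((ae_restrict_iff' measurableSet_Ioc).2 (ae_of_all _ fun s hs =>
          div_nonneg (by positivity) (le_of_lt (lt_trans one_pos hs.1))))]
      rw [hval, ← ENNReal.ofReal_mul (by positivity)]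
      exact le_of_eq (by ring_nf)
    calc (∫⁻ s2 in Ioc 1 T, Q s2) ≤ _ := step3
      _ = _ := step4
      _ ≤ ∫⁻ s1 in Ioc 1 T, ENNReal.ofReal (2 * C / s1) * ENNReal.ofReal M :=
          lintegral_mono_ae ((ae_restrict_iff' measurableSet_Ioc).2 (ae_of_all _ step5))
      _ ≤ ENNReal.ofReal (2 * C * M * ((n:ℝ) * t)) := step6
  -- conversion to Bochner integrals
  have hBo : (∫ s2 in (1:ℝ)..T, ∫ s1 in (1:ℝ)..s2,
      ∫ y : ℝ × ℝ, g (y.1 - y.2) * g y.2 * Real.exp (-(|y.2| * (s2 - s1)) - |y.1| * s1))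
      ≤ 2 * C * M * ((n:ℝ) * t) := by
    have hR0 : 0 ≤ 2 * C * M * ((n:ℝ) * t) := by
      have := hnt.le; positivity
    have hfin : (∫⁻ s2 in Ioc 1 T, Q s2) ≠ ⊤ :=
      ne_top_of_le_ne_top ENNReal.ofReal_ne_top hS
    have hsetmeas : MeasurableSet {q : ℝ × ℝ | q.1 ∈ Ioc 1 q.2} := by
      apply MeasurableSet.inter
      · exact measurableSet_lt measurable_const measurable_fst
      · exact measurableSet_le measurable_fst measurable_snd
    have hQmeas : Measurable Q := by
      have hVmeas : Measurable fun r : ℝ × ℝ => Set.indicator {q : ℝ × ℝ | q.1 ∈ Ioc 1 q.2}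
          (fun q => P q.1 q.2) (r.2, r.1) :=
        (hPmeas.indicator hsetmeas).comp measurable_swap
      have : Measurable fun s2 => ∫⁻ s1 : ℝ, Set.indicator {q : ℝ × ℝ | q.1 ∈ Ioc 1 q.2}
          (fun q => P q.1 q.2) (s1, s2) := hVmeas.lintegral_prod_right'
      have hQeq : Q = fun s2 => ∫⁻ s1 : ℝ, Set.indicator {q : ℝ × ℝ | q.1 ∈ Ioc 1 q.2}
          (fun q => P q.1 q.2) (s1, s2) := by
        funext s2
        rw [hQdef]
        simp only []
        rw [← lintegral_indicator measurableSet_Ioc]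
        refine lintegral_congr fun s1 => ?_
        by_cases h : s1 ∈ Ioc (1:ℝ) s2
        · simp [Set.indicator_apply, Set.mem_setOf_eq, h.1, h.2]
        · simp only [Set.indicator_apply, Set.mem_setOf_eq,
            if_neg h, if_neg (show ¬(1 < s1 ∧ s1 ≤ s2) by simpa [Set.mem_Ioc] using h)]
      rw [hQeq]
      exact this
    have hQfin : ∀ᵐ s2 ∂(volume.restrict (Ioc 1 T)), Q s2 < ⊤ :=
      ae_lt_top hQmeas hfin
    have hk : ∀ s1 s2 : ℝ, (∫ y : ℝ × ℝ,
        g (y.1 - y.2) * g y.2 * Real.exp (-(|y.2| * (s2 - s1)) - |y.1| * s1))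
        = (P s1 s2).toReal := by
      intro s1 s2
      apply integral_eq_lintegral_of_nonneg_ae
      · exact ae_of_all _ fun y =>
          mul_nonneg (mul_nonneg (hg0 _) (hg0 _)) (Real.exp_pos _).le
      · apply Continuous.aestronglyMeasurable
        fun_prop
    have heq_ae : ∀ᵐ s2 ∂(volume.restrict (Ioc 1 T)),
        (∫ s1 in (1:ℝ)..s2, ∫ y : ℝ × ℝ,
          g (y.1 - y.2) * g y.2 * Real.exp (-(|y.2| * (s2 - s1)) - |y.1| * s1))
        = (Q s2).toReal := by
      filter_upwards [hQfin, ae_restrict_mem measurableSet_Ioc] with s2 hfin2 hs2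
      rw [intervalIntegral.integral_of_le hs2.1.le]
      have hPm : AEMeasurable (fun s1 => P s1 s2) (volume.restrict (Ioc 1 s2)) :=
        (hPmeas.comp (measurable_id.prodMk measurable_const)).aemeasurable
      have hPf : ∀ᵐ s1 ∂(volume.restrict (Ioc 1 s2)), P s1 s2 < ⊤ := by
        apply ae_lt_top' hPm
        exact hfin2.ne
      simp_rw [hk]
      exact integral_toReal hPm hPf
    have hQmeas' : AEMeasurable Q (volume.restrict (Ioc 1 T)) := hQmeas.aemeasurable
    rw [intervalIntegral.integral_of_le hT1.le]
    calc (∫ s2 in Ioc 1 T, ∫ s1 in (1:ℝ)..s2, ∫ y : ℝ × ℝ,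
          g (y.1 - y.2) * g y.2 * Real.exp (-(|y.2| * (s2 - s1)) - |y.1| * s1))
        = ∫ s2 in Ioc 1 T, (Q s2).toReal := integral_congr_ae heq_ae
      _ = (∫⁻ s2 in Ioc 1 T, Q s2).toReal := integral_toReal hQmeas' hQfin
      _ ≤ 2 * C * M * ((n:ℝ) * t) := ENNReal.toReal_le_of_le_ofReal hR0 hS
  -- final arithmetic
  have hn0 : (n:ℝ) ≠ 0 := by positivity
  have h1n : 0 ≤ 1 / (n:ℝ) := by positivity
  calc (1 / (n:ℝ)) * ∫ s2 in (1:ℝ)..T, ∫ s1 in (1:ℝ)..s2,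
      ∫ y : ℝ × ℝ, g (y.1 - y.2) * g y.2 * Real.exp (-(|y.2| * (s2 - s1)) - |y.1| * s1)
      ≤ (1 / (n:ℝ)) * (2 * C * M * ((n:ℝ) * t)) := mul_le_mul_of_nonneg_left hBo h1n
    _ = 2 * C * M * t := by field_simp


end TightnessHelpers

/-- Tightness estimate (Step 1 of Proposition 4.2): the normalized triple integral
is bounded by `c t` with `c` depending only on `f`. -/
theorem tightness_estimate (f : ℝ → ℝ) (hf : Integrable f) (C : ℝ)
    (hF : ∀ y : ℝ, ‖fourierTransform f y‖ ≤ C * min |y| 1)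
    (hint : Integrable (fun y : ℝ => ‖fourierTransform f y‖ / |y|)) :
    ∃ c : ℝ, ∀ n : ℕ, 1 ≤ n → ∀ t : ℝ, 0 < t →
      (1 / (n : ℝ)) * ∫ s2 in (1:ℝ)..Real.exp (n * t), ∫ s1 in (1:ℝ)..s2,
        ∫ y : ℝ × ℝ, ‖fourierTransform f (y.1 - y.2)‖ *
          ‖fourierTransform f y.2‖ *
            Real.exp (-(|y.2| * (s2 - s1)) - |y.1| * s1)
      ≤ c * t := by
  exact tightness_aux (fun y => ‖fourierTransform f y‖) C
    (continuous_norm.comp (fourierTransform_continuous hf))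
    (fun y => norm_nonneg _) hF hint
end

section
/- For 1 < α ≤ 2, t > 0, and g : ℝ → ℝ nonnegative measurable with ∫_ℝ g(y) |y|^{-α} dy < ∞ and g(y) = O(y²) near 0: lim_{n→∞} n^{1/α} ∫_{(1-ε)nt}^{nt} ∫_ℝ g(y) s^{-1/α} e^{-|y|^α (nt - s)} dy ds lies between t^{-1/α} ∫_ℝ g(y)|y|^{-α} dy and (1-ε)^{-1/α} t^{-1/α} ∫_ℝ g(y)|y|^{-α} dy, for each ε ∈ (0,1); consequently lim_{n→∞} n^{1/α} ∫_0^{nt} ∫_ℝ g(y) s^{-1/α} e^{-|y|^α(nt-s)} dy ds = t^{-1/α} ∫_ℝ g(y) |y|^{-α} dy. -/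
open MeasureTheory Filter

namespace MainTimeWindowAux

open Real Set
open scoped Topology

lemma measurable_rpow_const' (c : ℝ) : Measurable fun x : ℝ => x ^ c := by
  rcases eq_or_ne c 0 with h | h
  · simp only [h, Real.rpow_zero]; exact measurable_const
  · have heq : (fun x : ℝ => x ^ c) = fun x =>
        if x = 0 then 0 else
          if x < 0 then Real.exp (Real.log x * c) * Real.cos (c * π) else Real.exp (Real.log x * c) := by
      funext x
      split_ifs with hx hneg
      · simp [hx, Real.zero_rpow h]
      · rw [Real.rpow_def_of_neg hneg]
      · rw [Real.rpow_def_of_pos (lt_of_le_of_ne (not_lt.mp hneg) (Ne.symm hx))]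
    rw [heq]
    refine Measurable.ite measurableSet_eq measurable_const ?_
    exact Measurable.ite measurableSet_Iio ((Real.measurable_log.mul_const c).exp.mul_const _)
      (Real.measurable_log.mul_const c).exp

lemma exp_mul_le' {x : ℝ} (hx : 0 ≤ x) : x * Real.exp (-x) ≤ 1 := by
  have h1 : x ≤ Real.exp x := by linarith [Real.add_one_le_exp x]
  calc x * Real.exp (-x) ≤ Real.exp x * Real.exp (-x) :=
        mul_le_mul_of_nonneg_right h1 (Real.exp_pos _).le
    _ = 1 := by rw [← Real.exp_add]; simp

lemma expint' {c : ℝ} (hc : 0 < c) : ∫ u in Ioi (0:ℝ), Real.exp (-c * u) = 1 / c := by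
  have h := integral_comp_mul_left_Ioi (fun x => Real.exp (-x)) 0 hc
  rw [mul_zero] at h
  simp only [smul_eq_mul, integral_exp_neg_Ioi_zero, mul_one] at h
  calc ∫ u in Ioi (0:ℝ), Real.exp (-c * u) = ∫ u in Ioi (0:ℝ), Real.exp (-(c * u)) := by
        simp [neg_mul]
    _ = c⁻¹ := h
    _ = 1 / c := (one_div c).symm

lemma ae_ne_zero : (∀ᵐ (y : ℝ) ∂(volume : Measure ℝ), y ≠ 0) := by rw [ae_iff]; simp

variable {α t : ℝ} {g : ℝ → ℝ}

/-- the inner spatial integral as a function of the elapsed time `r`. -/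

noncomputable def J (α : ℝ) (g : ℝ → ℝ) (r : ℝ) : ℝ := ∫ y : ℝ, g y * Real.exp (-|y| ^ α * r)

lemma g_zero (hpos : ∀ y, 0 ≤ g y)
    (hsq : ∃ C δ : ℝ, 0 < δ ∧ ∀ y : ℝ, |y| ≤ δ → g y ≤ C * y ^ 2) : g 0 = 0 := by
  obtain ⟨C, δ, hδ, hC⟩ := hsq
  have h := hC 0 (by simpa using hδ.le)
  simp only [ne_eq, OfNat.ofNat_ne_zero, not_false_eq_true, zero_pow, mul_zero] at h
  linarith [hpos 0]

lemma meas_slice (hg : Measurable g) (r : ℝ) :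
    Measurable fun y : ℝ => g y * Real.exp (-|y| ^ α * r) :=
  hg.mul ((((measurable_rpow_const' α).comp measurable_id.abs).neg.mul_const r).exp)

lemma J_nonneg (hpos : ∀ y, 0 ≤ g y) (r : ℝ) : 0 ≤ J α g r :=
  integral_nonneg fun y => mul_nonneg (hpos y) (Real.exp_pos _).le

lemma J_meas (hg : Measurable g) : Measurable (J α g) := by
  have : Measurable fun p : ℝ × ℝ => g p.2 * Real.exp (-|p.2| ^ α * p.1) :=
    (hg.comp measurable_snd).mul
      ((((measurable_rpow_const' α).comp measurable_snd.abs).neg.mul measurable_fst).exp)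
  exact (this.stronglyMeasurable.integral_prod_right').measurable

lemma integrable_slice (hg : Measurable g) (hpos : ∀ y, 0 ≤ g y)
    (hint : Integrable (fun y : ℝ => g y * |y| ^ (-α))) {r : ℝ} (hr : 0 < r) :
    Integrable fun y : ℝ => g y * Real.exp (-|y| ^ α * r) := by
  refine Integrable.mono' (hint.const_mul (1 / r)) (meas_slice hg r).aestronglyMeasurable ?_
  filter_upwards [ae_ne_zero] with y hy
  have hA : 0 < |y| ^ α := Real.rpow_pos_of_pos (abs_pos.mpr hy) α
  rw [Real.norm_eq_abs, abs_of_nonneg (mul_nonneg (hpos y) (Real.exp_pos _).le)]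
  have key : |y| ^ α * r * Real.exp (-(|y| ^ α * r)) ≤ 1 := exp_mul_le' (by positivity)
  have h1 : Real.exp (-(|y| ^ α * r)) ≤ (|y| ^ α * r)⁻¹ := by
    rw [← one_div, le_div_iff₀ (by positivity)]
    nlinarith [Real.exp_pos (-(|y| ^ α * r))]
  calc g y * Real.exp (-|y| ^ α * r) = g y * Real.exp (-(|y| ^ α * r)) := by rw [neg_mul]
    _ ≤ g y * (|y| ^ α * r)⁻¹ := mul_le_mul_of_nonneg_left h1 (hpos y)
    _ = 1 / r * (g y * (|y| ^ α)⁻¹) := by rw [mul_inv]; ring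
    _ = 1 / r * (g y * |y| ^ (-α)) := by rw [← Real.rpow_neg (abs_nonneg y)]

lemma J_antitone (hg : Measurable g) (hpos : ∀ y, 0 ≤ g y)
    (hint : Integrable (fun y : ℝ => g y * |y| ^ (-α))) {r₁ r₂ : ℝ} (h1 : 0 < r₁)
    (h12 : r₁ ≤ r₂) : J α g r₂ ≤ J α g r₁ := by
  refine integral_mono (integrable_slice hg hpos hint (lt_of_lt_of_le h1 h12))
    (integrable_slice hg hpos hint h1) fun y => ?_
  refine mul_le_mul_of_nonneg_left (Real.exp_le_exp.mpr ?_) (hpos y)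
  have : 0 ≤ |y| ^ α := Real.rpow_nonneg (abs_nonneg y) α
  nlinarith

lemma slice_integral_eq (hpos : ∀ y, 0 ≤ g y)
    (hsq : ∃ C δ : ℝ, 0 < δ ∧ ∀ y : ℝ, |y| ≤ δ → g y ≤ C * y ^ 2) (y : ℝ) :
    ∫ u in Ioi (0:ℝ), g y * Real.exp (-|y| ^ α * u) = g y * |y| ^ (-α) := by
  rcases eq_or_ne y 0 with rfl | hy
  · simp [g_zero hpos hsq]
  · have hc : 0 < |y| ^ α := Real.rpow_pos_of_pos (abs_pos.mpr hy) α
    rw [MeasureTheory.integral_const_mul, expint' hc, Real.rpow_neg (abs_nonneg y), one_div]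

lemma prod_integrable (hg : Measurable g) (hpos : ∀ y, 0 ≤ g y)
    (hsq : ∃ C δ : ℝ, 0 < δ ∧ ∀ y : ℝ, |y| ≤ δ → g y ≤ C * y ^ 2)
    (hint : Integrable (fun y : ℝ => g y * |y| ^ (-α))) :
    Integrable (fun p : ℝ × ℝ => g p.1 * Real.exp (-|p.1| ^ α * p.2))
      (volume.prod (volume.restrict (Ioi 0))) := by
  have hmeas : Measurable fun p : ℝ × ℝ => g p.1 * Real.exp (-|p.1| ^ α * p.2) :=
    (hg.comp measurable_fst).mul
      ((((measurable_rpow_const' α).comp measurable_fst.abs).neg.mul measurable_snd).exp)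
  rw [integrable_prod_iff hmeas.aestronglyMeasurable]
  constructor
  · filter_upwards [ae_ne_zero] with y hy
    exact (exp_neg_integrableOn_Ioi 0 (Real.rpow_pos_of_pos (abs_pos.mpr hy) α)).const_mul (g y)
  · have heq : (fun y : ℝ => ∫ u in Ioi (0:ℝ), ‖g y * Real.exp (-|y| ^ α * u)‖)
        = fun y : ℝ => g y * |y| ^ (-α) := by
      funext y
      have hn : ∀ u : ℝ, ‖g y * Real.exp (-|y| ^ α * u)‖ = g y * Real.exp (-|y| ^ α * u) :=
        fun u => by rw [Real.norm_eq_abs, abs_of_nonneg (mul_nonneg (hpos y) (Real.exp_pos _).le)]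
      simp_rw [hn]
      exact slice_integral_eq hpos hsq y
    rw [heq]
    exact hint

lemma J_integrableOn (hg : Measurable g) (hpos : ∀ y, 0 ≤ g y)
    (hsq : ∃ C δ : ℝ, 0 < δ ∧ ∀ y : ℝ, |y| ≤ δ → g y ≤ C * y ^ 2)
    (hint : Integrable (fun y : ℝ => g y * |y| ^ (-α))) :
    IntegrableOn (J α g) (Ioi 0) :=
  (prod_integrable hg hpos hsq hint).integral_prod_right

lemma J_integral (hg : Measurable g) (hpos : ∀ y, 0 ≤ g y)
    (hsq : ∃ C δ : ℝ, 0 < δ ∧ ∀ y : ℝ, |y| ≤ δ → g y ≤ C * y ^ 2)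
    (hint : Integrable (fun y : ℝ => g y * |y| ^ (-α))) :
    ∫ u in Ioi (0:ℝ), J α g u = ∫ y : ℝ, g y * |y| ^ (-α) := by
  have hswap := integral_integral_swap (f := fun y u => g y * Real.exp (-|y| ^ α * u))
    (prod_integrable hg hpos hsq hint)
  have : ∫ y : ℝ, ∫ u in Ioi (0:ℝ), g y * Real.exp (-|y| ^ α * u)
      = ∫ y : ℝ, g y * |y| ^ (-α) :=
    integral_congr_ae (Filter.Eventually.of_forall (slice_integral_eq hpos hsq))
  rw [← this, hswap]
  rfl

lemma sq_exp (hα1 : 1 < α) {r : ℝ} (hr : 0 < r) :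
    Integrable (fun y : ℝ => y ^ 2 * Real.exp (-|y| ^ α * r)) ∧
      ∫ y : ℝ, y ^ 2 * Real.exp (-|y| ^ α * r)
        = 2 * (r ^ (-(3:ℝ) / α) * (1 / α) * Real.Gamma (3 / α)) := by
  set F : ℝ → ℝ := fun x => x ^ 2 * Real.exp (-|x| ^ α * r) with hF
  have heq : EqOn (fun x : ℝ => x ^ (2:ℝ) * Real.exp (-r * x ^ α)) F (Ioi 0) := by
    intro x hx
    simp only [F]
    rw [abs_of_pos hx, show (2:ℝ) = ((2:ℕ):ℝ) by norm_num, Real.rpow_natCast]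
    ring_nf
  have hIoi : IntegrableOn F (Ioi 0) := by
    have h := integrableOn_rpow_mul_exp_neg_mul_rpow (p := α) (s := 2) (b := r)
      (by norm_num) (lt_trans zero_lt_one hα1) hr
    exact h.congr_fun heq measurableSet_Ioi
  have hFeven : ∀ x : ℝ, F (-x) = F x := fun x => by simp [F, abs_neg, neg_sq]
  constructor
  · have hIic : IntegrableOn F (Iic 0) := by
      rw [← Measure.map_neg_eq_self (volume : Measure ℝ)]
      have m : MeasurableEmbedding fun x : ℝ => -x := (Homeomorph.neg ℝ).measurableEmbedding
      rw [m.integrableOn_map_iff]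
      have : (F ∘ fun x : ℝ => -x) = F := funext fun x => hFeven x
      rw [this]
      simp only [neg_preimage, neg_Iic, neg_zero]
      exact Iff.mpr integrableOn_Ici_iff_integrableOn_Ioi hIoi
    have := hIic.union hIoi
    rwa [Iic_union_Ioi, integrableOn_univ] at this
  · have habs : (fun y : ℝ => F |y|) = F := funext fun y => by
      rcases abs_choice y with h | h
      · rw [h]
      · rw [h, hFeven]
    have hval := integral_rpow_mul_exp_neg_mul_rpow (p := α) (q := 2) (b := r)
      (lt_trans zero_lt_one hα1) (by norm_num) hr
    have hcongr : ∫ x in Ioi (0:ℝ), F x = ∫ x in Ioi (0:ℝ), x ^ (2:ℝ) * Real.exp (-r * x ^ α) :=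
      (setIntegral_congr_fun measurableSet_Ioi heq).symm
    calc ∫ y : ℝ, F y = ∫ y : ℝ, F |y| := by rw [habs]
      _ = 2 * ∫ x in Ioi (0:ℝ), F x := integral_comp_abs
      _ = 2 * (r ^ (-(2+1) / α) * (1 / α) * Real.Gamma ((2+1) / α)) := by
          rw [hcongr, hval]
      _ = 2 * (r ^ (-(3:ℝ) / α) * (1 / α) * Real.Gamma (3 / α)) := by norm_num

lemma n_mul_J_tendsto (hα1 : 1 < α) (hα2 : α ≤ 2) (hg : Measurable g) (hpos : ∀ y, 0 ≤ g y)
    (hsq : ∃ C δ : ℝ, 0 < δ ∧ ∀ y : ℝ, |y| ≤ δ → g y ≤ C * y ^ 2)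
    (hint : Integrable (fun y : ℝ => g y * |y| ^ (-α))) {a : ℝ} (ha : 0 < a) :
    Tendsto (fun n : ℕ => (n : ℝ) * J α g (a * n)) atTop (𝓝 0) := by
  obtain ⟨C, δ, hδ, hC⟩ := hsq
  set C' : ℝ := max C 0 with hC'
  have hC'0 : 0 ≤ C' := le_max_right C 0
  set L : ℝ := ∫ y : ℝ, g y * |y| ^ (-α) with hLdef
  have hα0 : (0:ℝ) < α := lt_trans zero_lt_one hα1
  -- pointwise bound on J
  have hJb : ∀ r : ℝ, 1 ≤ r → J α g r ≤
      C' * (2 * (r ^ (-(3:ℝ) / α) * (1 / α) * Real.Gamma (3 / α)))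
        + Real.exp (-δ ^ α * (r - 1)) * L := by
    intro r hr1
    have hr : 0 < r := lt_of_lt_of_le one_pos hr1
    have hsqi := sq_exp hα1 hr
    have hmono : J α g r ≤ ∫ y : ℝ,
        (C' * (y ^ 2 * Real.exp (-|y| ^ α * r))
          + Real.exp (-δ ^ α * (r - 1)) * (g y * |y| ^ (-α))) := by
      refine integral_mono (integrable_slice hg hpos hint hr)
        ((hsqi.1.const_mul C').add (hint.const_mul _)) fun y => ?_
      dsimp only
      by_cases hy : |y| ≤ δ
      · have h1 : g y * Real.exp (-|y| ^ α * r) ≤ C' * (y ^ 2 * Real.exp (-|y| ^ α * r)) := by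
          rw [← mul_assoc]
          refine mul_le_mul_of_nonneg_right ?_ (Real.exp_pos _).le
          calc g y ≤ C * y ^ 2 := hC y hy
            _ ≤ C' * y ^ 2 := mul_le_mul_of_nonneg_right (le_max_left _ _) (sq_nonneg y)
        have h2 : 0 ≤ Real.exp (-δ ^ α * (r - 1)) * (g y * |y| ^ (-α)) :=
          mul_nonneg (Real.exp_pos _).le
            (mul_nonneg (hpos y) (Real.rpow_nonneg (abs_nonneg y) _))
        linarith
      · push_neg at hy
        have hy0 : y ≠ 0 := by
          intro h; rw [h, abs_zero] at hy; linarith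
        have hδα : δ ^ α ≤ |y| ^ α := Real.rpow_le_rpow hδ.le hy.le hα0.le
        have hxe : |y| ^ α * Real.exp (-|y| ^ α) ≤ 1 :=
          exp_mul_le' (Real.rpow_nonneg (abs_nonneg y) α)
        have key : Real.exp (-|y| ^ α * r) ≤ |y| ^ (-α) * Real.exp (-δ ^ α * (r - 1)) := by
          have e1 : Real.exp (-|y| ^ α * r)
              = Real.exp (-|y| ^ α) * Real.exp (-|y| ^ α * (r - 1)) := by
            rw [← Real.exp_add]; congr 1; ring
          have e2 : Real.exp (-|y| ^ α * (r - 1)) ≤ Real.exp (-δ ^ α * (r - 1)) := by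
            apply Real.exp_le_exp.mpr; nlinarith
          have e3 : Real.exp (-|y| ^ α) ≤ |y| ^ (-α) := by
            rw [Real.rpow_neg (abs_nonneg y), ← one_div,
              le_div_iff₀ (Real.rpow_pos_of_pos (abs_pos.mpr hy0) α)]
            nlinarith [Real.exp_pos (-|y| ^ α)]
          calc Real.exp (-|y| ^ α * r)
              = Real.exp (-|y| ^ α) * Real.exp (-|y| ^ α * (r - 1)) := e1
            _ ≤ |y| ^ (-α) * Real.exp (-δ ^ α * (r - 1)) :=
                mul_le_mul e3 e2 (Real.exp_pos _).le (Real.rpow_nonneg (abs_nonneg y) _)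
        have h1 : g y * Real.exp (-|y| ^ α * r)
            ≤ Real.exp (-δ ^ α * (r - 1)) * (g y * |y| ^ (-α)) := by
          calc g y * Real.exp (-|y| ^ α * r)
              ≤ g y * (|y| ^ (-α) * Real.exp (-δ ^ α * (r - 1))) :=
                mul_le_mul_of_nonneg_left key (hpos y)
            _ = Real.exp (-δ ^ α * (r - 1)) * (g y * |y| ^ (-α)) := by ring
        have h2 : 0 ≤ C' * (y ^ 2 * Real.exp (-|y| ^ α * r)) :=
          mul_nonneg hC'0 (mul_nonneg (sq_nonneg y) (Real.exp_pos _).le)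
        linarith
    calc J α g r ≤ _ := hmono
      _ = C' * (2 * (r ^ (-(3:ℝ) / α) * (1 / α) * Real.Gamma (3 / α)))
          + Real.exp (-δ ^ α * (r - 1)) * L := by
        rw [integral_add (hsqi.1.const_mul C') (hint.const_mul _),
          MeasureTheory.integral_const_mul, MeasureTheory.integral_const_mul, hsqi.2, ← hLdef]
  -- the two explicit vanishing sequences
  have hT1 : Tendsto (fun n : ℕ =>
      (n:ℝ) * (C' * (2 * ((a * n) ^ (-(3:ℝ) / α) * (1 / α) * Real.Gamma (3 / α)))))
      atTop (𝓝 0) := by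
    have hexp : (0:ℝ) < 3 / α - 1 := by
      have : (1:ℝ) < 3 / α := (one_lt_div hα0).mpr (by linarith)
      linarith
    have hbase : Tendsto (fun n : ℕ => ((n:ℝ)) ^ (1 - 3 / α)) atTop (𝓝 0) := by
      have h := (tendsto_rpow_neg_atTop hexp).comp (tendsto_natCast_atTop_atTop (R := ℝ))
      convert h using 2 with n
      · rw [Function.comp_apply]; congr 1; ring
    have e : ∀ᶠ n : ℕ in atTop,
        (C' * 2 * (1 / α) * Real.Gamma (3 / α) * a ^ (-(3:ℝ) / α)) * ((n:ℝ)) ^ (1 - 3 / α)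
          = (n:ℝ) * (C' * (2 * ((a * n) ^ (-(3:ℝ) / α) * (1 / α) * Real.Gamma (3 / α)))) := by
      filter_upwards [eventually_gt_atTop 0] with n hn
      have hn0 : (0:ℝ) < n := by exact_mod_cast hn
      have hmr : (a * (n:ℝ)) ^ (-(3:ℝ) / α) = a ^ (-(3:ℝ) / α) * ((n:ℝ)) ^ (-(3:ℝ) / α) :=
        Real.mul_rpow ha.le (Nat.cast_nonneg n)
      have hnn : ((n:ℝ)) ^ (1 - 3 / α) = (n:ℝ) * ((n:ℝ)) ^ (-(3:ℝ) / α) := by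
        rw [show (1 - 3 / α) = 1 + (-(3:ℝ) / α) by ring, Real.rpow_add hn0, Real.rpow_one]
      rw [hmr, hnn]; ring
    exact Tendsto.congr' e (by simpa using (hbase.const_mul _))
  have hT2 : Tendsto (fun n : ℕ =>
      (n:ℝ) * (Real.exp (-δ ^ α * (a * n - 1)) * L)) atTop (𝓝 0) := by
    have hb' : 0 < δ ^ α * a := mul_pos (Real.rpow_pos_of_pos hδ α) ha
    have base := tendsto_rpow_mul_exp_neg_mul_atTop_nhds_zero 1 (δ ^ α * a) hb'
    have h2 := (base.comp (tendsto_natCast_atTop_atTop (R := ℝ))).mul_const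
      (Real.exp (δ ^ α) * L)
    rw [zero_mul] at h2
    refine Tendsto.congr' ?_ h2
    filter_upwards with n
    have he : Real.exp (-δ ^ α * (a * n - 1))
        = Real.exp (-(δ ^ α * a) * n) * Real.exp (δ ^ α) := by
      rw [← Real.exp_add]; congr 1; ring
    rw [Function.comp_apply, Real.rpow_one, he]; ring
  have hsum := hT1.add hT2
  rw [add_zero] at hsum
  refine tendsto_of_tendsto_of_tendsto_of_le_of_le' tendsto_const_nhds hsum ?_ ?_
  · exact Filter.Eventually.of_forall fun n => mul_nonneg (Nat.cast_nonneg n) (J_nonneg hpos _)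
  · have han : ∀ᶠ n : ℕ in atTop, (1:ℝ) ≤ a * n := by
      filter_upwards [(tendsto_natCast_atTop_atTop (R := ℝ)).eventually_ge_atTop (1 / a)]
        with n hn
      rw [div_le_iff₀ ha] at hn
      nlinarith
    filter_upwards [han] with n hn
    have := mul_le_mul_of_nonneg_left (hJb (a * n) hn) (Nat.cast_nonneg (α := ℝ) n)
    rw [mul_add] at this
    exact this

lemma window (hα1 : 1 < α) (ht : 0 < t) (hg : Measurable g) (hpos : ∀ y, 0 ≤ g y)
    (hsq : ∃ C δ : ℝ, 0 < δ ∧ ∀ y : ℝ, |y| ≤ δ → g y ≤ C * y ^ 2)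
    (hint : Integrable (fun y : ℝ => g y * |y| ^ (-α))) {ε : ℝ} (hε : 0 < ε) (hε1 : ε < 1) :
    Tendsto (fun n : ℕ => (n : ℝ) ^ (1 / α) *
      ∫ s in ((1 - ε) * n * t)..(n * t), s ^ (-(1 / α)) * J α g (n * t - s)) atTop
      (𝓝 (t ^ (-(1 / α)) * ∫ y : ℝ, g y * |y| ^ (-α))) := by
  have hα0 : (0:ℝ) < α := lt_trans zero_lt_one hα1
  have hc0 : -(1 / α) ≤ 0 := by
    have : (0:ℝ) ≤ 1 / α := by positivity
    linarith
  set Fn : ℕ → ℝ → ℝ := fun n u =>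
    (Ioc (0:ℝ) (ε * n * t)).indicator (fun u => (t - u / n) ^ (-(1 / α)) * J α g u) u with hFn
  have hdct : Tendsto (fun n => ∫ u in Ioi (0:ℝ), Fn n u) atTop
      (𝓝 (∫ u in Ioi (0:ℝ), t ^ (-(1 / α)) * J α g u)) := by
    refine tendsto_integral_of_dominated_convergence
      (fun u => ((1 - ε) * t) ^ (-(1 / α)) * J α g u) ?_ ?_ ?_ ?_
    · intro n
      exact ((((measurable_rpow_const' _).comp
        (measurable_const.sub (measurable_id.div_const _))).mul (J_meas hg)).indicator
          measurableSet_Ioc).aestronglyMeasurable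
    · exact (J_integrableOn hg hpos hsq hint).const_mul _
    · intro n
      refine Filter.Eventually.of_forall fun u => ?_
      by_cases hu : u ∈ Ioc (0:ℝ) (ε * ↑n * t)
      · rcases Nat.eq_zero_or_pos n with rfl | hn
        · exfalso
          simp only [Nat.cast_zero, mul_zero, zero_mul] at hu
          exact absurd hu.2 (not_le.mpr hu.1)
        · have hn0 : (0:ℝ) < n := by exact_mod_cast hn
          have h1 : u / ↑n ≤ ε * t := by
            rw [div_le_iff₀ hn0]
            calc u ≤ ε * ↑n * t := hu.2
              _ = ε * t * ↑n := by ring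
          have hbase : (1 - ε) * t ≤ t - u / ↑n := by nlinarith
          have hbase0 : (0:ℝ) < (1 - ε) * t := by nlinarith
          simp only [Fn, indicator_of_mem hu]
          rw [Real.norm_eq_abs, abs_of_nonneg (mul_nonneg
            (Real.rpow_nonneg (le_trans hbase0.le hbase) _) (J_nonneg hpos u))]
          exact mul_le_mul_of_nonneg_right
            (Real.rpow_le_rpow_of_nonpos hbase0 hbase hc0) (J_nonneg hpos u)
      · simp only [Fn, indicator_of_notMem hu, norm_zero]
        exact mul_nonneg (Real.rpow_nonneg (by nlinarith) _) (J_nonneg hpos u)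
    · filter_upwards [ae_restrict_mem measurableSet_Ioi] with u hu
      have hu0 : (0:ℝ) < u := hu
      have hbase : Tendsto (fun n : ℕ => t - u / ↑n) atTop (𝓝 t) := by
        have h2 := (tendsto_const_nhds (x := t)).sub (tendsto_const_div_atTop_nhds_zero_nat u)
        rwa [sub_zero] at h2
      have hrpow : Tendsto (fun n : ℕ => (t - u / ↑n) ^ (-(1 / α))) atTop
          (𝓝 (t ^ (-(1 / α)))) :=
        ((Real.continuousAt_rpow_const t _ (Or.inl ht.ne')).tendsto).comp hbase
      refine Tendsto.congr' ?_ (hrpow.mul_const (J α g u))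
      have hev : ∀ᶠ n : ℕ in atTop, u ≤ ε * ↑n * t := by
        filter_upwards [(tendsto_natCast_atTop_atTop (R := ℝ)).eventually_ge_atTop
          (u / (ε * t))] with n hn
        rw [div_le_iff₀ (by positivity : (0:ℝ) < ε * t)] at hn
        calc u ≤ ↑n * (ε * t) := hn
          _ = ε * ↑n * t := by ring
      filter_upwards [hev] with n hn
      simp only [Fn]
      rw [indicator_of_mem (Set.mem_Ioc.mpr ⟨hu0, hn⟩)]
  rw [MeasureTheory.integral_const_mul, J_integral hg hpos hsq hint] at hdct
  refine Tendsto.congr' ?_ hdct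
  filter_upwards [eventually_ge_atTop 1] with n hn
  have hn0 : (0:ℝ) < n := by exact_mod_cast hn
  have hsub := intervalIntegral.integral_comp_sub_left (a := (1 - ε) * ↑n * t) (b := (↑n * t))
    (fun u => (↑n * t - u) ^ (-(1 / α)) * J α g u) (↑n * t)
  simp only [sub_sub_cancel, sub_self] at hsub
  rw [show ((n:ℝ) * t - (1 - ε) * ↑n * t) = ε * ↑n * t by ring] at hsub
  rw [hsub, intervalIntegral.integral_of_le (show (0:ℝ) ≤ ε * ↑n * t by positivity)]
  have hL : ∫ u in Ioi (0:ℝ), Fn n u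
      = ∫ u in Ioc (0:ℝ) (ε * ↑n * t), (t - u / ↑n) ^ (-(1 / α)) * J α g u := by
    simp only [Fn]
    rw [integral_indicator measurableSet_Ioc, Measure.restrict_restrict measurableSet_Ioc,
      inter_eq_left.mpr Ioc_subset_Ioi_self]
  rw [hL, ← MeasureTheory.integral_const_mul]
  refine setIntegral_congr_fun measurableSet_Ioc fun u hu => ?_
  have h1 : u / ↑n ≤ ε * t := by
    rw [div_le_iff₀ hn0]
    calc u ≤ ε * ↑n * t := hu.2
      _ = ε * t * ↑n := by ring
  have h2 : (0:ℝ) ≤ t - u / ↑n := by nlinarith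
  have h3 : (↑n : ℝ) * t - u = ↑n * (t - u / ↑n) := by field_simp
  have h4 : ((n:ℝ)) ^ (1 / α) * ((n:ℝ)) ^ (-(1 / α)) = 1 := by
    rw [← Real.rpow_add hn0]; simp
  calc (t - u / ↑n) ^ (-(1 / α)) * J α g u
      = (((n:ℝ)) ^ (1 / α) * ((n:ℝ)) ^ (-(1 / α))) * ((t - u / ↑n) ^ (-(1 / α)) * J α g u) := by
        rw [h4, one_mul]
    _ = ((n:ℝ)) ^ (1 / α) * ((↑n * (t - u / ↑n)) ^ (-(1 / α)) * J α g u) := by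
        rw [Real.mul_rpow hn0.le h2]; ring
    _ = ((n:ℝ)) ^ (1 / α) * ((↑n * t - u) ^ (-(1 / α)) * J α g u) := by rw [← h3]

lemma piece1 (hα1 : 1 < α) (ht : 0 < t) (hg : Measurable g) (hpos : ∀ y, 0 ≤ g y)
    (hint : Integrable (fun y : ℝ => g y * |y| ^ (-α))) {n : ℕ} (hn : 1 ≤ n) :
    IntervalIntegrable (fun s : ℝ => s ^ (-(1 / α)) * J α g (↑n * t - s)) volume 0
      ((1 - 1 / 2) * ↑n * t) := by
  have hα0 : (0:ℝ) < α := lt_trans zero_lt_one hα1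
  have hn0 : (0:ℝ) < n := by exact_mod_cast hn
  have hb0 : (0:ℝ) < (1 - 1 / 2) * ↑n * t := by nlinarith
  have hr1 : (-1:ℝ) < -(1 / α) := by
    have : 1 / α < 1 := by rw [div_lt_one hα0]; exact hα1
    linarith
  rw [intervalIntegrable_iff_integrableOn_Ioc_of_le hb0.le]
  have hrint : IntegrableOn (fun s : ℝ => s ^ (-(1 / α))) (Ioc 0 ((1 - 1 / 2) * ↑n * t)) := by
    rw [← intervalIntegrable_iff_integrableOn_Ioc_of_le hb0.le]
    exact intervalIntegral.intervalIntegrable_rpow' hr1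
  refine Integrable.mono' (hrint.const_mul (J α g (↑n * t - (1 - 1 / 2) * ↑n * t)))
    (((measurable_rpow_const' _).mul
      ((J_meas hg).comp (measurable_const.sub measurable_id))).aestronglyMeasurable) ?_
  filter_upwards [ae_restrict_mem measurableSet_Ioc] with s hs
  have hs0 : 0 < s := hs.1
  rw [Real.norm_eq_abs, abs_of_nonneg (mul_nonneg (Real.rpow_nonneg hs0.le _) (J_nonneg hpos _))]
  calc s ^ (-(1 / α)) * J α g (↑n * t - s)
      ≤ s ^ (-(1 / α)) * J α g (↑n * t - (1 - 1 / 2) * ↑n * t) := by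
        refine mul_le_mul_of_nonneg_left
          (J_antitone hg hpos hint (by nlinarith) (by linarith [hs.2])) (Real.rpow_nonneg hs0.le _)
    _ = J α g (↑n * t - (1 - 1 / 2) * ↑n * t) * s ^ (-(1 / α)) := mul_comm _ _

lemma piece2 (hα1 : 1 < α) (ht : 0 < t) (hg : Measurable g) (hpos : ∀ y, 0 ≤ g y)
    (hsq : ∃ C δ : ℝ, 0 < δ ∧ ∀ y : ℝ, |y| ≤ δ → g y ≤ C * y ^ 2)
    (hint : Integrable (fun y : ℝ => g y * |y| ^ (-α))) {n : ℕ} (hn : 1 ≤ n) :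
    IntervalIntegrable (fun s : ℝ => s ^ (-(1 / α)) * J α g (↑n * t - s)) volume
      ((1 - 1 / 2) * ↑n * t) (↑n * t) := by
  have hn0 : (0:ℝ) < n := by exact_mod_cast hn
  have hb0 : (0:ℝ) < (1 - 1 / 2) * ↑n * t := by nlinarith
  have hbnt : (1 - 1 / 2) * ↑n * t ≤ ↑n * t := by nlinarith
  rw [intervalIntegrable_iff_integrableOn_Ioc_of_le hbnt]
  have hJi : IntervalIntegrable (J α g) volume 0 (↑n * t - (1 - 1 / 2) * ↑n * t) := by
    rw [intervalIntegrable_iff_integrableOn_Ioc_of_le (by nlinarith)]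
    exact (J_integrableOn hg hpos hsq hint).mono_set Ioc_subset_Ioi_self
  have hcomp := hJi.comp_sub_left (↑n * t)
  rw [sub_zero, sub_sub_cancel] at hcomp
  have hJint : IntegrableOn (fun s : ℝ => J α g (↑n * t - s))
      (Ioc ((1 - 1 / 2) * ↑n * t) (↑n * t)) := by
    rw [← intervalIntegrable_iff_integrableOn_Ioc_of_le hbnt]
    exact hcomp.symm
  refine Integrable.mono' (hJint.const_mul (((1 - 1 / 2) * ↑n * t) ^ (-(1 / α))))
    (((measurable_rpow_const' _).mul
      ((J_meas hg).comp (measurable_const.sub measurable_id))).aestronglyMeasurable) ?_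
  filter_upwards [ae_restrict_mem measurableSet_Ioc] with s hs
  have hs0 : 0 < s := lt_trans hb0 hs.1
  rw [Real.norm_eq_abs, abs_of_nonneg (mul_nonneg (Real.rpow_nonneg hs0.le _) (J_nonneg hpos _))]
  have hc0 : -(1 / α) ≤ 0 := by
    have : (0:ℝ) ≤ 1 / α := by positivity
    linarith
  exact mul_le_mul_of_nonneg_right
    (Real.rpow_le_rpow_of_nonpos hb0 hs.1.le hc0) (J_nonneg hpos _)

lemma head_tendsto (hα1 : 1 < α) (hα2 : α ≤ 2) (ht : 0 < t) (hg : Measurable g)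
    (hpos : ∀ y, 0 ≤ g y)
    (hsq : ∃ C δ : ℝ, 0 < δ ∧ ∀ y : ℝ, |y| ≤ δ → g y ≤ C * y ^ 2)
    (hint : Integrable (fun y : ℝ => g y * |y| ^ (-α))) :
    Tendsto (fun n : ℕ => (n : ℝ) ^ (1 / α) *
      ∫ s in (0:ℝ)..((1 - 1 / 2) * ↑n * t), s ^ (-(1 / α)) * J α g (↑n * t - s)) atTop
      (𝓝 0) := by
  have hα0 : (0:ℝ) < α := lt_trans zero_lt_one hα1
  have hc1 : (0:ℝ) < -(1 / α) + 1 := by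
    have : 1 / α < 1 := by rw [div_lt_one hα0]; exact hα1
    linarith
  have ht2 : (0:ℝ) < t / 2 := by linarith
  set Kc : ℝ := (t / 2) ^ (-(1 / α) + 1) / (-(1 / α) + 1) with hKc
  have hdecay := (n_mul_J_tendsto hα1 hα2 hg hpos hsq hint ht2).const_mul Kc
  rw [mul_zero] at hdecay
  refine tendsto_of_tendsto_of_tendsto_of_le_of_le' tendsto_const_nhds hdecay ?_ ?_
  · filter_upwards [eventually_ge_atTop 1] with n hn
    have hn0 : (0:ℝ) < n := by exact_mod_cast hn
    refine mul_nonneg (Real.rpow_nonneg hn0.le _) ?_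
    refine intervalIntegral.integral_nonneg (by nlinarith) fun u hu => ?_
    exact mul_nonneg (Real.rpow_nonneg hu.1 _) (J_nonneg hpos _)
  · filter_upwards [eventually_ge_atTop 1] with n hn
    have hn0 : (0:ℝ) < n := by exact_mod_cast hn
    have hb0 : (0:ℝ) < (1 - 1 / 2) * ↑n * t := by nlinarith
    have harg : (↑n : ℝ) * t - (1 - 1 / 2) * ↑n * t = t / 2 * ↑n := by ring
    have hrint : IntervalIntegrable (fun s : ℝ => J α g (t / 2 * ↑n) * s ^ (-(1 / α)))
        volume 0 ((1 - 1 / 2) * ↑n * t) :=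
      (intervalIntegral.intervalIntegrable_rpow' (by linarith)).const_mul _
    have hmono : (∫ s in (0:ℝ)..((1 - 1 / 2) * ↑n * t), s ^ (-(1 / α)) * J α g (↑n * t - s))
        ≤ ∫ s in (0:ℝ)..((1 - 1 / 2) * ↑n * t), J α g (t / 2 * ↑n) * s ^ (-(1 / α)) := by
      refine intervalIntegral.integral_mono_on hb0.le (piece1 hα1 ht hg hpos hint hn)
        hrint fun s hs => ?_
      rcases eq_or_lt_of_le hs.1 with rfl | hs0
      · rw [Real.zero_rpow (show -(1 / α) ≠ 0 from ne_of_lt (neg_neg_of_pos (by positivity)))]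
        simp
      · calc s ^ (-(1 / α)) * J α g (↑n * t - s)
            ≤ s ^ (-(1 / α)) * J α g (t / 2 * ↑n) := by
              refine mul_le_mul_of_nonneg_left ?_ (Real.rpow_nonneg hs0.le _)
              refine J_antitone hg hpos hint (by nlinarith) (by nlinarith [hs.2])
          _ = J α g (t / 2 * ↑n) * s ^ (-(1 / α)) := mul_comm _ _
    have hval : (∫ s in (0:ℝ)..((1 - 1 / 2) * ↑n * t), J α g (t / 2 * ↑n) * s ^ (-(1 / α)))
        = J α g (t / 2 * ↑n) * (((1 - 1 / 2) * ↑n * t) ^ (-(1 / α) + 1) / (-(1 / α) + 1)) := by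
      rw [intervalIntegral.integral_const_mul, integral_rpow (Or.inl (by linarith)),
        Real.zero_rpow (ne_of_gt hc1), sub_zero]
    have hsplit : ((1 - 1 / 2) * ↑n * t) ^ (-(1 / α) + 1)
        = (t / 2) ^ (-(1 / α) + 1) * (↑n : ℝ) ^ (-(1 / α) + 1) := by
      rw [show ((1 - 1 / 2) * (↑n:ℝ) * t) = t / 2 * ↑n by ring]
      exact Real.mul_rpow ht2.le hn0.le
    have hpow : ((n:ℝ)) ^ (1 / α) * ((n:ℝ)) ^ (-(1 / α) + 1) = (n : ℝ) := by
      rw [← Real.rpow_add hn0]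
      norm_num
    calc (n : ℝ) ^ (1 / α) * ∫ s in (0:ℝ)..((1 - 1 / 2) * ↑n * t),
          s ^ (-(1 / α)) * J α g (↑n * t - s)
        ≤ (n : ℝ) ^ (1 / α) *
            (J α g (t / 2 * ↑n) * (((1 - 1 / 2) * ↑n * t) ^ (-(1 / α) + 1) / (-(1 / α) + 1))) := by
          rw [← hval]
          exact mul_le_mul_of_nonneg_left hmono (Real.rpow_nonneg hn0.le _)
      _ = Kc * ((n:ℝ) * J α g (t / 2 * ↑n)) := by
          rw [hsplit, hKc]
          rw [show (n : ℝ) ^ (1 / α) * (J α g (t / 2 * ↑n) *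
            ((t / 2) ^ (-(1 / α) + 1) * (↑n : ℝ) ^ (-(1 / α) + 1) / (-(1 / α) + 1)))
            = ((t / 2) ^ (-(1 / α) + 1) / (-(1 / α) + 1)) *
              (((n:ℝ) ^ (1 / α) * ((n:ℝ)) ^ (-(1 / α) + 1)) * J α g (t / 2 * ↑n)) by ring, hpow]

end MainTimeWindowAux

open MainTimeWindowAux

/-- The main time window: for each `ε ∈ (0,1)` the liminf/limsup of
`n^{1/α} ∫_{(1-ε)nt}^{nt} ∫ g(y) s^{-1/α} e^{-|y|^α(nt-s)} dy ds` lie between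
`t^{-1/α} ∫ g(y)|y|^{-α} dy` and `(1-ε)^{-1/α} t^{-1/α} ∫ g(y)|y|^{-α} dy`;
consequently the full integral converges to `t^{-1/α} ∫ g(y)|y|^{-α} dy`. -/
theorem main_time_window (α : ℝ) (hα : α ∈ Set.Ioc (1 : ℝ) 2) (t : ℝ) (ht : 0 < t)
    (g : ℝ → ℝ) (hg : Measurable g) (hpos : ∀ y, 0 ≤ g y)
    (hsq : ∃ C δ : ℝ, 0 < δ ∧ ∀ y : ℝ, |y| ≤ δ → g y ≤ C * y ^ 2)
    (hint : Integrable (fun y : ℝ => g y * |y| ^ (-α))) :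
    (∀ ε ∈ Set.Ioo (0 : ℝ) 1,
      t ^ (-(1 / α)) * (∫ y : ℝ, g y * |y| ^ (-α)) ≤
        liminf (fun n : ℕ => (n : ℝ) ^ (1 / α) *
          ∫ s in ((1 - ε) * n * t)..(n * t),
            ∫ y : ℝ, g y * s ^ (-(1 / α)) * Real.exp (-|y| ^ α * (n * t - s))) atTop ∧
      limsup (fun n : ℕ => (n : ℝ) ^ (1 / α) *
          ∫ s in ((1 - ε) * n * t)..(n * t),
            ∫ y : ℝ, g y * s ^ (-(1 / α)) * Real.exp (-|y| ^ α * (n * t - s))) atTop ≤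
        (1 - ε) ^ (-(1 / α)) * t ^ (-(1 / α)) * ∫ y : ℝ, g y * |y| ^ (-α)) ∧
    Tendsto (fun n : ℕ => (n : ℝ) ^ (1 / α) *
        ∫ s in (0:ℝ)..(n * t),
          ∫ y : ℝ, g y * s ^ (-(1 / α)) * Real.exp (-|y| ^ α * (n * t - s)))
      atTop (nhds (t ^ (-(1 / α)) * ∫ y : ℝ, g y * |y| ^ (-α))) := by
  obtain ⟨hα1, hα2⟩ := hα
  have hinner : ∀ (r s : ℝ), (∫ y : ℝ, g y * s ^ (-(1 / α)) * Real.exp (-|y| ^ α * r))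
      = s ^ (-(1 / α)) * J α g r := by
    intro r s
    rw [show (fun y : ℝ => g y * s ^ (-(1 / α)) * Real.exp (-|y| ^ α * r))
      = fun y : ℝ => s ^ (-(1 / α)) * (g y * Real.exp (-|y| ^ α * r)) from
        funext fun y => by ring]
    exact MeasureTheory.integral_const_mul _ _
  simp_rw [hinner]
  have hL0 : 0 ≤ ∫ y : ℝ, g y * |y| ^ (-α) :=
    integral_nonneg fun y => mul_nonneg (hpos y) (Real.rpow_nonneg (abs_nonneg y) _)
  constructor
  · intro ε hε
    have hw := window hα1 ht hg hpos hsq hint hε.1 hε.2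
    refine ⟨hw.liminf_eq.ge, ?_⟩
    have h1 : (1:ℝ) ≤ (1 - ε) ^ (-(1 / α)) :=
      Real.one_le_rpow_of_pos_of_le_one_of_nonpos (by linarith [hε.2]) (by linarith [hε.1])
        (by
          have h2 : (0:ℝ) ≤ 1 / α := by positivity
          linarith)
    refine hw.limsup_eq.le.trans ?_
    calc t ^ (-(1 / α)) * ∫ y : ℝ, g y * |y| ^ (-α)
        = 1 * (t ^ (-(1 / α)) * ∫ y : ℝ, g y * |y| ^ (-α)) := (one_mul _).symm
      _ ≤ (1 - ε) ^ (-(1 / α)) * (t ^ (-(1 / α)) * ∫ y : ℝ, g y * |y| ^ (-α)) :=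
          mul_le_mul_of_nonneg_right h1 (mul_nonneg (Real.rpow_nonneg ht.le _) hL0)
      _ = (1 - ε) ^ (-(1 / α)) * t ^ (-(1 / α)) * ∫ y : ℝ, g y * |y| ^ (-α) :=
          (mul_assoc _ _ _).symm
  · have hw := window (ε := 1/2) hα1 ht hg hpos hsq hint one_half_pos (by norm_num)
    have hh := head_tendsto hα1 hα2 ht hg hpos hsq hint
    have hsum := hh.add hw
    rw [zero_add] at hsum
    refine Tendsto.congr' ?_ hsum
    filter_upwards [eventually_ge_atTop 1] with n hn
    show _ = _
    rw [← mul_add, intervalIntegral.integral_add_adjacent_intervals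
      (piece1 hα1 ht hg hpos hint hn) (piece2 hα1 ht hg hpos hsq hint hn)]
end
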